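/- arXiv:1812.02219 — 4 statements merged into one kernel-verified Lean document; each statement's English description precedes it below -/
import Mathlib

section
/- Let q ≥ 2 be an integer and let n be a positive integer with n ≤ q² + 2q − 3. Let T = C_{−1/q} = {0, ∞} ∪ {k : k ∈ ℤ, 1 ≤ |k| ≤ q−1} ∪ {1/k : k ∈ ℤ, 1 ≤ |k| ≤ q−1} ∪ {−1/q}. Then any two functions f, g : ℤ² → ℝ that are T-clue-equivalent on I_{n,n} agree at every point of I_{n,n}; equivalently, every solvable n × n RK puzzle with clue slopes T has a unique solution. -/
open Classical

/-- A slope is an element of `ℚ ∪ {∞}`; `none` denotes `∞`. -/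
abbrev Slope := Option ℚ

/-- The clue of `f` along the line of slope `s` (vertical line `x = c` when `s = ∞ = none`,
and the line `y = r·x + c` when `s = some r`), with respect to the grid
`I_{n,m} = {1,…,n} × {1,…,m} ⊆ ℤ²`: the sum of `f` over the grid points lying on the line. -/
noncomputable def clueSum (n m : ℕ) (s : Slope) (c : ℝ) (f : ℤ × ℤ → ℝ) : ℝ :=
  ∑ p ∈ (Finset.Icc (1 : ℤ) n ×ˢ Finset.Icc (1 : ℤ) m).filter
      (fun p => match s with
        | none => (p.1 : ℝ) = c
        | some r => (p.2 : ℝ) = (r : ℝ) * (p.1 : ℝ) + c),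
    f p

/-- `f` and `g` are `T`-clue-equivalent on `I_{n,m}`: for every slope `s ∈ T` and every line
of slope `s`, the clues of `f` and `g` along that line agree. -/
def ClueEquiv (n m : ℕ) (T : Set Slope) (f g : ℤ × ℤ → ℝ) : Prop :=
  ∀ s ∈ T, ∀ c : ℝ, clueSum n m s c f = clueSum n m s c g

/-- The entry `p ∈ I_{n,m}` is uniquely solvable with respect to the slope set `T`. -/
def UniqSolv (n m : ℕ) (T : Set Slope) (p : ℤ × ℤ) : Prop :=
  ∀ f g : ℤ × ℤ → ℝ, ClueEquiv n m T f g → f p = g p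

/-- The slope set `C_{−1/q} = {0, ∞} ∪ {±k, ±1/k : 1 ≤ k ≤ q−1} ∪ {−1/q}`. -/
def CnegInvQ (q : ℕ) : Set Slope :=
  ({some 0, none} ∪
    {s | ∃ k : ℤ, 1 ≤ |k| ∧ |k| ≤ (q : ℤ) - 1 ∧ (s = some (k : ℚ) ∨ s = some (1 / (k : ℚ)))}) ∪
  {some (-(1 / (q : ℚ)))}

namespace RKAux
def SuppIn (h : ℤ × ℤ → ℝ) (X2 Y1 Y2 : ℤ) : Prop :=
  ∀ p : ℤ × ℤ, h p ≠ 0 → 1 ≤ p.1 ∧ p.1 ≤ X2 ∧ Y1 ≤ p.2 ∧ p.2 ≤ Y2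
noncomputable def LSum (h : ℤ × ℤ → ℝ) (d p : ℤ × ℤ) : ℝ := ∑ᶠ t : ℤ, h (p + t • d)
noncomputable def coll (h : ℤ × ℤ → ℝ) (d p : ℤ × ℤ) : ℝ :=
  ∑ᶠ t : ℤ, if 1 ≤ t then h (p + t • d) else 0
lemma smul_fst (t : ℤ) (d : ℤ × ℤ) (p : ℤ × ℤ) : (p + t • d).1 = p.1 + t * d.1 := rfl
lemma smul_snd (t : ℤ) (d : ℤ × ℤ) (p : ℤ × ℤ) : (p + t • d).2 = p.2 + t * d.2 := rfl
lemma t_bound {h : ℤ × ℤ → ℝ} {X2 Y1 Y2 : ℤ} (hs : SuppIn h X2 Y1 Y2) {d : ℤ × ℤ}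
    (hd : 1 ≤ d.1) {p : ℤ × ℤ} {t : ℤ} (ht : h (p + t • d) ≠ 0) :
    -(|p.1| + |X2|) ≤ t ∧ t ≤ |p.1| + |X2| := by
  obtain ⟨h1, h2, -, -⟩ := hs _ ht
  rw [smul_fst] at h1 h2
  have hp1 : -|p.1| ≤ p.1 ∧ p.1 ≤ |p.1| := ⟨neg_abs_le _, le_abs_self _⟩
  have hX : X2 ≤ |X2| := le_abs_self _
  rcases le_or_gt 0 t with h0 | h0
  · have : t ≤ t * d.1 := le_mul_of_one_le_right h0 hd
    constructor <;> nlinarith [abs_nonneg p.1, abs_nonneg X2]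
  · have : t * d.1 ≤ t := by nlinarith
    constructor <;> nlinarith [abs_nonneg p.1, abs_nonneg X2]
lemma lsum_eq {h : ℤ × ℤ → ℝ} {X2 Y1 Y2 : ℤ} (hs : SuppIn h X2 Y1 Y2) {d : ℤ × ℤ}
    (hd : 1 ≤ d.1) (p : ℤ × ℤ) {M : ℤ} (hM : |p.1| + |X2| ≤ M) :
    LSum h d p = ∑ t ∈ Finset.Icc (-M) M, h (p + t • d) := by
  refine finsum_eq_sum_of_support_subset _ ?_
  intro t ht
  simp only [Function.mem_support] at ht
  obtain ⟨hb1, hb2⟩ := t_bound hs hd ht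
  simp only [Finset.coe_Icc, Set.mem_Icc]
  omega
lemma coll_eq {h : ℤ × ℤ → ℝ} {X2 Y1 Y2 : ℤ} (hs : SuppIn h X2 Y1 Y2) {d : ℤ × ℤ}
    (hd : 1 ≤ d.1) (p : ℤ × ℤ) {M : ℤ} (hM : |p.1| + |X2| ≤ M) :
    coll h d p = ∑ t ∈ Finset.Icc 1 M, h (p + t • d) := by
  have h1 : coll h d p = ∑ t ∈ Finset.Icc 1 M, (if 1 ≤ t then h (p + t • d) else 0) := by
    refine finsum_eq_sum_of_support_subset _ ?_
    intro t ht
    simp only [Function.mem_support] at ht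
    have ht1 : 1 ≤ t := by by_contra hc; simp [hc] at ht
    rw [if_pos ht1] at ht
    obtain ⟨hb1, hb2⟩ := t_bound hs hd ht
    simp only [Finset.coe_Icc, Set.mem_Icc]
    omega
  rw [h1]
  exact Finset.sum_congr rfl fun t ht => if_pos (Finset.mem_Icc.mp ht).1

lemma coll_step {h : ℤ × ℤ → ℝ} {X2 Y1 Y2 : ℤ} (hs : SuppIn h X2 Y1 Y2) {d : ℤ × ℤ}
    (hd : 1 ≤ d.1) (p : ℤ × ℤ) :
    coll h d (p - d) = h p + coll h d p := by
  have habs : |p.1 - d.1| ≤ |p.1| + |d.1| := abs_sub p.1 d.1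
  have hd0 : (0:ℤ) ≤ |d.1| := abs_nonneg _
  have hp0 : (0:ℤ) ≤ |p.1| := abs_nonneg _
  have hX0 : (0:ℤ) ≤ |X2| := abs_nonneg _
  set M : ℤ := |p.1| + |d.1| + |X2| with hMdef
  have hpd : (p - d).1 = p.1 - d.1 := rfl
  have e1 : coll h d (p - d) = ∑ t ∈ Finset.Icc 1 (M + 1), h (p - d + t • d) :=
    coll_eq hs hd _ (by rw [hpd]; omega)
  have e2 : coll h d p = ∑ t ∈ Finset.Icc 1 M, h (p + t • d) := coll_eq hs hd _ (by omega)
  rw [e1, e2]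
  have key : ∀ t : ℤ, p - d + t • d = p + (t - 1) • d := by
    intro t; rw [sub_smul, one_smul]; abel
  calc ∑ t ∈ Finset.Icc 1 (M + 1), h (p - d + t • d)
      = ∑ t ∈ Finset.Icc 0 M, h (p + t • d) := by
        refine Finset.sum_nbij' (fun t => t - 1) (fun t => t + 1) ?_ ?_ ?_ ?_ ?_
        · intro a ha; simp only [Finset.mem_Icc] at ha ⊢; omega
        · intro a ha; simp only [Finset.mem_Icc] at ha ⊢; omega
        · intro a _; ring
        · intro a _; ring
        · intro a _; rw [key]
    _ = h (p + (0:ℤ) • d) + ∑ t ∈ Finset.Icc 1 M, h (p + t • d) := by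
        rw [show Finset.Icc (0:ℤ) M = insert 0 (Finset.Icc 1 M) by ext x; simp [Finset.mem_Icc]; omega,
          Finset.sum_insert (by simp)]
    _ = h p + ∑ t ∈ Finset.Icc 1 M, h (p + t • d) := by rw [zero_smul, add_zero]
lemma coll_zero_of_nonpos {h : ℤ × ℤ → ℝ} {X2 Y1 Y2 : ℤ} (hs : SuppIn h X2 Y1 Y2) {d : ℤ × ℤ}
    (hd : 1 ≤ d.1) (hz : ∀ p, LSum h d p = 0) {p : ℤ × ℤ} (hp : p.1 ≤ 0) :
    coll h d p = 0 := by
  set M : ℤ := |p.1| + |X2| with hM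
  have e1 : coll h d p = ∑ t ∈ Finset.Icc 1 M, h (p + t • d) := coll_eq hs hd _ le_rfl
  have e2 : LSum h d p = ∑ t ∈ Finset.Icc (-M) M, h (p + t • d) := lsum_eq hs hd _ le_rfl
  have e3 : ∑ t ∈ Finset.Icc 1 M, h (p + t • d) = ∑ t ∈ Finset.Icc (-M) M, h (p + t • d) := by
    refine Finset.sum_subset ?_ ?_
    · intro t ht; simp only [Finset.mem_Icc] at ht ⊢; omega
    · intro t ht hnt
      simp only [Finset.mem_Icc] at ht hnt
      by_contra hne
      have := (hs _ hne).1
      rw [smul_fst] at this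
      have ht0 : t ≤ 0 := by omega
      nlinarith
  rw [e1, e3, ← e2, hz]

lemma coll_suppIn {h : ℤ × ℤ → ℝ} {X2 Y1 Y2 : ℤ} (hs : SuppIn h X2 Y1 Y2) {d : ℤ × ℤ}
    (hd : 1 ≤ d.1) (hz : ∀ p, LSum h d p = 0) :
    SuppIn (coll h d) (X2 - d.1) (Y1 - |X2| * |d.2|) (Y2 + |X2| * |d.2|) := by
  intro p hp
  have hp1 : 1 ≤ p.1 := by
    by_contra hc
    exact hp (coll_zero_of_nonpos hs hd hz (by omega))
  have e1 : coll h d p = ∑ t ∈ Finset.Icc 1 (|p.1| + |X2|), h (p + t • d) :=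
    coll_eq hs hd _ le_rfl
  rw [e1] at hp
  obtain ⟨t, ht, hne⟩ := Finset.exists_ne_zero_of_sum_ne_zero hp
  simp only [Finset.mem_Icc] at ht
  obtain ⟨b1, b2, b3, b4⟩ := hs _ hne
  rw [smul_fst] at b1 b2
  rw [smul_snd] at b3 b4
  have ht1 : 1 ≤ t := ht.1
  have htd : d.1 ≤ t * d.1 := le_mul_of_one_le_left (by omega) ht1
  have ht2 : t ≤ |X2| := by nlinarith [le_abs_self X2]
  have htd2 : |t * d.2| ≤ |X2| * |d.2| := by
    rw [abs_mul]
    exact mul_le_mul_of_nonneg_right (by rw [abs_of_pos (by omega : (0:ℤ) < t)]; exact ht2) (abs_nonneg _)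
  have h5 := le_abs_self (t * d.2)
  have h6 := neg_abs_le (t * d.2)
  exact ⟨hp1, by omega, by omega, by omega⟩

lemma lsum_ne_exists {h : ℤ × ℤ → ℝ} {X2 Y1 Y2 : ℤ} (hs : SuppIn h X2 Y1 Y2) {d : ℤ × ℤ}
    (hd : 1 ≤ d.1) {p : ℤ × ℤ} (hp : LSum h d p ≠ 0) :
    ∃ t : ℤ, h (p + t • d) ≠ 0 := by
  rw [lsum_eq hs hd p le_rfl] at hp
  obtain ⟨t, -, hne⟩ := Finset.exists_ne_zero_of_sum_ne_zero hp
  exact ⟨t, hne⟩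

lemma lsum_coll_step {h : ℤ × ℤ → ℝ} {X2 Y1 Y2 : ℤ} (hs : SuppIn h X2 Y1 Y2) {d : ℤ × ℤ}
    (hd : 1 ≤ d.1) (hzd : ∀ p, LSum h d p = 0) {e : ℤ × ℤ} (he : 1 ≤ e.1)
    (hze : ∀ p, LSum h e p = 0) (p : ℤ × ℤ) :
    LSum (coll h d) e p = LSum (coll h d) e (p + d) := by
  have hcs := coll_suppIn hs hd hzd
  have habs : |p.1 + d.1| ≤ |p.1| + |d.1| := abs_add_le _ _
  have hXd : |X2 - d.1| ≤ |X2| + |d.1| := abs_sub _ _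
  have hd0 : (0:ℤ) ≤ |d.1| := abs_nonneg _
  set M : ℤ := |p.1| + 2 * |d.1| + |X2| with hM
  have e1 : LSum (coll h d) e p = ∑ t ∈ Finset.Icc (-M) M, coll h d (p + t • e) :=
    lsum_eq hcs he _ (by omega)
  have e2 : LSum (coll h d) e (p + d) = ∑ t ∈ Finset.Icc (-M) M, coll h d (p + d + t • e) :=
    lsum_eq hcs he _ (by rw [show (p+d).1 = p.1 + d.1 from rfl]; omega)
  have e3 : LSum h e (p + d) = ∑ t ∈ Finset.Icc (-M) M, h (p + d + t • e) :=
    lsum_eq hs he _ (by rw [show (p+d).1 = p.1 + d.1 from rfl]; omega)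
  have key : ∀ t : ℤ, coll h d (p + t • e) - coll h d (p + d + t • e) = h (p + d + t • e) := by
    intro t
    have := coll_step hs hd (p + d + t • e)
    rw [show p + d + t • e - d = p + t • e by abel] at this
    rw [this]; ring
  have heq : LSum (coll h d) e p - LSum (coll h d) e (p + d) = LSum h e (p + d) := by
    rw [e1, e2, e3, ← Finset.sum_sub_distrib]
    exact Finset.sum_congr rfl fun t _ => key t
  rw [hze] at heq
  linarith
lemma lsum_coll_periodic {h : ℤ × ℤ → ℝ} {X2 Y1 Y2 : ℤ} (hs : SuppIn h X2 Y1 Y2) {d : ℤ × ℤ}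
    (hd : 1 ≤ d.1) (hzd : ∀ p, LSum h d p = 0) {e : ℤ × ℤ} (he : 1 ≤ e.1)
    (hze : ∀ p, LSum h e p = 0) (p : ℤ × ℤ) (k : ℕ) :
    LSum (coll h d) e (p + (k : ℤ) • d) = LSum (coll h d) e p := by
  induction k with
  | zero => simp
  | succ k ih =>
    have step := lsum_coll_step hs hd hzd he hze (p + (k : ℤ) • d)
    push_cast
    rw [show p + ((k : ℤ) + 1) • d = p + (k : ℤ) • d + d by rw [add_smul, one_smul]; abel]
    rw [← step, ih]

lemma lsum_coll_zero {h : ℤ × ℤ → ℝ} {X2 Y1 Y2 : ℤ} (hs : SuppIn h X2 Y1 Y2) {d : ℤ × ℤ}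
    (hd : 1 ≤ d.1) (hzd : ∀ p, LSum h d p = 0) {e : ℤ × ℤ} (he : 1 ≤ e.1)
    (hze : ∀ p, LSum h e p = 0) (hdet : d.1 * e.2 ≠ d.2 * e.1) (p : ℤ × ℤ) :
    LSum (coll h d) e p = 0 := by
  by_contra hne
  have hcs := coll_suppIn hs hd hzd
  set X2' : ℤ := X2 - d.1 with hX2'
  set Y1' : ℤ := Y1 - |X2| * |d.2| with hY1'
  set Y2' : ℤ := Y2 + |X2| * |d.2| with hY2'
  set C : ℤ := |e.2| * |X2'| + |e.1| * (|Y1'| + |Y2'|) with hC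
  set c0 : ℤ := e.2 * p.1 - e.1 * p.2 with hc0
  have hC0 : 0 ≤ C := by positivity
  set k0 : ℤ := C + |c0| + 1 with hk0
  have hk0pos : 0 ≤ k0 := by have := abs_nonneg c0; omega
  have hper := lsum_coll_periodic hs hd hzd he hze p k0.toNat
  rw [Int.toNat_of_nonneg hk0pos] at hper
  rw [← hper] at hne
  obtain ⟨t, hcoll⟩ := lsum_ne_exists hcs he hne
  obtain ⟨b1, b2, b3, b4⟩ := hcs _ hcoll
  set A := p + k0 • d + t • e with hA
  have hAx : A.1 = p.1 + k0 * d.1 + t * e.1 := rfl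
  have hAy : A.2 = p.2 + k0 * d.2 + t * e.2 := rfl
  have habsx : |A.1| ≤ |X2'| := abs_le.mpr ⟨by linarith [abs_nonneg X2'], by linarith [le_abs_self X2']⟩
  have habsy : |A.2| ≤ |Y1'| + |Y2'| := by
    rw [abs_le]
    constructor
    · have := neg_abs_le Y1'; have := abs_nonneg Y2'; omega
    · have := le_abs_self Y2'; have := abs_nonneg Y1'; omega
  have hEbound : |e.2 * A.1 - e.1 * A.2| ≤ C := by
    calc |e.2 * A.1 - e.1 * A.2| ≤ |e.2 * A.1| + |e.1 * A.2| := abs_sub _ _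
    _ = |e.2| * |A.1| + |e.1| * |A.2| := by rw [abs_mul, abs_mul]
    _ ≤ C := by
        rw [hC]
        exact add_le_add (mul_le_mul_of_nonneg_left habsx (abs_nonneg _))
          (mul_le_mul_of_nonneg_left habsy (abs_nonneg _))
  have hEeq : e.2 * A.1 - e.1 * A.2 = c0 + k0 * (d.1 * e.2 - d.2 * e.1) := by
    rw [hAx, hAy, hc0]; ring
  have hdet1 : 1 ≤ |d.1 * e.2 - d.2 * e.1| := by
    exact Int.one_le_abs (sub_ne_zero.mpr hdet)
  have hlow : k0 ≤ |k0 * (d.1 * e.2 - d.2 * e.1)| := by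
    rw [abs_mul, abs_of_nonneg hk0pos]
    exact le_mul_of_one_le_right hk0pos hdet1
  have htri : |k0 * (d.1 * e.2 - d.2 * e.1)| ≤ |c0 + k0 * (d.1 * e.2 - d.2 * e.1)| + |c0| := by
    have := abs_sub (c0 + k0 * (d.1 * e.2 - d.2 * e.1)) c0
    simpa using this
  rw [hEeq] at hEbound
  omega

lemma ghost_zero : ∀ (L : List (ℤ × ℤ)), (∀ d ∈ L, 1 ≤ d.1) →
    List.Pairwise (fun d e => d.1 * e.2 ≠ d.2 * e.1) L →
    ∀ (X2 Y1 Y2 : ℤ) (h : ℤ × ℤ → ℝ), SuppIn h X2 Y1 Y2 →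
    (∀ d ∈ L, ∀ p, LSum h d p = 0) → X2 ≤ (L.map Prod.fst).sum → ∀ p, h p = 0 := by
  intro L
  induction L with
  | nil =>
    intro _ _ X2 Y1 Y2 h hs _ hX p
    by_contra hne
    obtain ⟨h1, h2, -, -⟩ := hs _ hne
    simp at hX
    omega
  | cons d L ih =>
    intro hpos hpw X2 Y1 Y2 h hs hz hX p
    have hd1 : 1 ≤ d.1 := hpos d (List.mem_cons_self)
    have hzd : ∀ p, LSum h d p = 0 := hz d (List.mem_cons_self)
    have hg : ∀ p, coll h d p = 0 := by
      refine ih (fun e heL => hpos e (List.mem_cons_of_mem _ heL))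
        (List.Pairwise.of_cons hpw) (X2 - d.1) (Y1 - |X2| * |d.2|) (Y2 + |X2| * |d.2|)
        (coll h d) (coll_suppIn hs hd1 hzd) ?_ ?_
      · intro e heL q
        exact lsum_coll_zero hs hd1 hzd (hpos e (List.mem_cons_of_mem _ heL))
          (hz e (List.mem_cons_of_mem _ heL)) ((List.pairwise_cons.mp hpw).1 e heL) q
      · simp only [List.map_cons, List.sum_cons] at hX ⊢
        omega
    have := coll_step hs hd1 p
    rw [hg, hg] at this
    linarith

lemma lsum_zero_of_clue (n : ℕ) (f g : ℤ × ℤ → ℝ) (T : Set Slope)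
    (hce : ClueEquiv n n T f g) (d : ℤ × ℤ) (hd1 : 1 ≤ d.1)
    (hd : d.1 = 1 ∨ d.2 = 1 ∨ d.2 = -1)
    (hT : some ((d.2 : ℚ) / (d.1 : ℚ)) ∈ T) (p : ℤ × ℤ) :
    LSum (fun z => if 1 ≤ z.1 ∧ z.1 ≤ (n : ℤ) ∧ 1 ≤ z.2 ∧ z.2 ≤ (n : ℤ) then f z - g z else 0)
      d p = 0 := by
  set hdif : ℤ × ℤ → ℝ :=
    fun z => if 1 ≤ z.1 ∧ z.1 ≤ (n : ℤ) ∧ 1 ≤ z.2 ∧ z.2 ≤ (n : ℤ) then f z - g z else 0 with hdifdef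
  have hsupp : SuppIn hdif (n : ℤ) 1 (n : ℤ) := by
    intro z hz
    by_contra hc
    simp only [not_and_or, not_le] at hc
    apply hz
    show (if 1 ≤ z.1 ∧ z.1 ≤ (n : ℤ) ∧ 1 ≤ z.2 ∧ z.2 ≤ (n : ℤ) then f z - g z else 0) = 0
    rw [if_neg (by omega)]
  set r : ℚ := (d.2 : ℚ) / (d.1 : ℚ) with hr
  have hd1R : ((d.1 : ℤ) : ℝ) ≠ 0 := by
    simp only [ne_eq, Int.cast_eq_zero]; omega
  have hrd : (r : ℝ) * (d.1 : ℝ) = (d.2 : ℝ) := by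
    rw [hr]
    push_cast
    field_simp
  set c : ℝ := (p.2 : ℝ) - (r : ℝ) * (p.1 : ℝ) with hc
  -- the filtered set of grid points on the line
  set S : Finset (ℤ × ℤ) := (Finset.Icc (1 : ℤ) n ×ˢ Finset.Icc (1 : ℤ) n).filter
      (fun z => (z.2 : ℝ) = (r : ℝ) * (z.1 : ℝ) + c) with hS
  -- line membership iff integer relation
  have hline : ∀ z : ℤ × ℤ, ((z.2 : ℝ) = (r : ℝ) * (z.1 : ℝ) + c) ↔
      d.1 * (z.2 - p.2) = d.2 * (z.1 - p.1) := by
    intro z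
    rw [hc]
    constructor
    · intro hz
      have hR : ((d.1 : ℤ) : ℝ) * ((z.2 : ℝ) - (p.2 : ℝ)) =
          ((d.2 : ℤ) : ℝ) * ((z.1 : ℝ) - (p.1 : ℝ)) := by
        have : (z.2 : ℝ) - (p.2 : ℝ) = (r : ℝ) * ((z.1 : ℝ) - (p.1 : ℝ)) := by
          rw [hz]; ring
        rw [this, ← hrd]; ring
      exact_mod_cast hR
    · intro hz
      have hR : ((d.1 : ℤ) : ℝ) * ((z.2 : ℝ) - (p.2 : ℝ)) =
          ((d.2 : ℤ) : ℝ) * ((z.1 : ℝ) - (p.1 : ℝ)) := by exact_mod_cast hz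
      rw [← hrd] at hR
      have h2 : (z.2 : ℝ) - (p.2 : ℝ) = (r : ℝ) * ((z.1 : ℝ) - (p.1 : ℝ)) := by
        apply mul_left_cancel₀ hd1R
        rw [show ((d.1:ℤ):ℝ) * ((r:ℝ) * ((z.1:ℝ) - (p.1:ℝ))) = ((r:ℝ) * (d.1:ℝ)) * ((z.1:ℝ) - (p.1:ℝ)) by ring]
        exact hR
      linarith [h2]
  -- the clue along the line through p vanishes for the difference
  have hclue : ∑ z ∈ S, (f z - g z) = 0 := by
    have := hce (some r) hT c
    rw [clueSum, clueSum] at this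
    rw [Finset.sum_sub_distrib]
    rw [hS]
    rw [sub_eq_zero]
    exact this
  -- identify LSum with the clue sum
  have habsn : |(n : ℤ)| = (n : ℤ) := abs_of_nonneg (by positivity)
  set M : ℤ := |p.1| + (n : ℤ) with hM
  have e1 : LSum hdif d p = ∑ t ∈ Finset.Icc (-M) M, hdif (p + t • d) :=
    lsum_eq hsupp hd1 p (by omega)
  have memS : ∀ t : ℤ, hdif (p + t • d) ≠ 0 → p + t • d ∈ S := by
    intro t ht
    have hb := hsupp _ ht
    rw [hS, Finset.mem_filter, Finset.mem_product, Finset.mem_Icc, Finset.mem_Icc]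
    refine ⟨⟨⟨hb.1, hb.2.1⟩, ⟨hb.2.2.1, hb.2.2.2⟩⟩, ?_⟩
    rw [hline]
    rw [smul_fst, smul_snd]
    ring
  have e2 : ∑ t ∈ Finset.Icc (-M) M, hdif (p + t • d) = ∑ z ∈ S, hdif z := by
    rw [← Finset.sum_filter_of_ne (p := fun t => p + t • d ∈ S) (fun t _ ht => memS t ht)]
    refine Finset.sum_nbij' (fun t => p + t • d)
      (fun z => if d.1 = 1 then z.1 - p.1 else d.2 * (z.2 - p.2)) ?_ ?_ ?_ ?_ ?_
    · intro t htm
      exact (Finset.mem_filter.mp htm).2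
    · intro z hz
      have hzS := hz
      rw [hS, Finset.mem_filter, Finset.mem_product, Finset.mem_Icc, Finset.mem_Icc] at hz
      obtain ⟨⟨⟨g1, g2⟩, g3, g4⟩, hlz⟩ := hz
      rw [hline] at hlz
      have hp1a : p.1 ≤ |p.1| := le_abs_self _
      have hp1b : -|p.1| ≤ p.1 := neg_abs_le _
      by_cases hcase : d.1 = 1
      · rw [Finset.mem_filter]
        constructor
        · simp only [if_pos hcase, Finset.mem_Icc]; omega
        · simp only [if_pos hcase]
          have : p + (z.1 - p.1) • d = z := by
            have : z.2 - p.2 = d.2 * (z.1 - p.1) := by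
              have := hlz; rw [hcase] at this; linarith
            apply Prod.ext
            · rw [smul_fst, hcase]; ring
            · rw [smul_snd]; linear_combination -this
          rw [this]; exact hzS
      · have hd2 : d.2 = 1 ∨ d.2 = -1 := by rcases hd with h | h | h <;> [exact absurd h hcase; exact Or.inl h; exact Or.inr h]
        have hpz : p + (d.2 * (z.2 - p.2)) • d = z := by
          apply Prod.ext
          · rw [smul_fst]
            rcases hd2 with h | h <;> rw [h] <;> rw [h] at hlz
            · linear_combination hlz
            · linear_combination -hlz
          · rw [smul_snd]
            rcases hd2 with h | h <;> rw [h] <;> ring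
        rw [Finset.mem_filter]
        constructor
        · simp only [if_neg hcase, Finset.mem_Icc]
          have hfst : p.1 + (d.2 * (z.2 - p.2)) * d.1 = z.1 := by
            have := congrArg Prod.fst hpz
            rw [smul_fst] at this; exact this
          have habs2 : |d.2 * (z.2 - p.2)| ≤ |d.2 * (z.2 - p.2) * d.1| := by
            rw [abs_mul (d.2 * (z.2 - p.2)) d.1]
            exact le_mul_of_one_le_right (abs_nonneg _) (by rw [abs_of_pos (by omega : (0:ℤ) < d.1)]; omega)
          have : |d.2 * (z.2 - p.2) * d.1| = |z.1 - p.1| := by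
            rw [show d.2 * (z.2 - p.2) * d.1 = z.1 - p.1 by linarith [hfst]]
          rw [this] at habs2
          have h1 := le_abs_self (z.1 - p.1)
          have h2 := neg_abs_le (z.1 - p.1)
          have h3 := abs_sub z.1 p.1
          have h4 := le_abs_self (d.2 * (z.2 - p.2))
          have h5 := neg_abs_le (d.2 * (z.2 - p.2))
          have h6 : |z.1| = z.1 := abs_of_pos (by omega)
          constructor <;> omega
        · simp only [if_neg hcase]; rw [hpz]; exact hzS
    · intro t htm
      by_cases hcase : d.1 = 1
      · simp only [if_pos hcase]; rw [smul_fst, hcase]; ring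
      · have hd2 : d.2 = 1 ∨ d.2 = -1 := by rcases hd with h | h | h <;> [exact absurd h hcase; exact Or.inl h; exact Or.inr h]
        simp only [if_neg hcase]
        rw [smul_snd]
        rcases hd2 with h | h <;> rw [h] <;> ring
    · intro z hz
      rw [hS, Finset.mem_filter, Finset.mem_product, Finset.mem_Icc, Finset.mem_Icc] at hz
      obtain ⟨⟨⟨g1, g2⟩, g3, g4⟩, hlz⟩ := hz
      rw [hline] at hlz
      by_cases hcase : d.1 = 1
      · simp only [if_pos hcase]
        apply Prod.ext
        · rw [smul_fst, hcase]; ring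
        · rw [smul_snd]
          have h7 := hlz; rw [hcase] at h7
          have h8 : z.2 - p.2 = d.2 * (z.1 - p.1) := by linarith
          linear_combination -h8
      · have hd2 : d.2 = 1 ∨ d.2 = -1 := by rcases hd with h | h | h <;> [exact absurd h hcase; exact Or.inl h; exact Or.inr h]
        simp only [if_neg hcase]
        apply Prod.ext
        · rw [smul_fst]
          rcases hd2 with h | h <;> rw [h] <;> rw [h] at hlz
          · linear_combination hlz
          · linear_combination -hlz
        · rw [smul_snd]
          rcases hd2 with h | h <;> rw [h] <;> ring
    · intro t _; rfl
  have e3 : ∑ z ∈ S, hdif z = ∑ z ∈ S, (f z - g z) := by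
    refine Finset.sum_congr rfl fun z hz => ?_
    rw [hS, Finset.mem_filter, Finset.mem_product, Finset.mem_Icc, Finset.mem_Icc] at hz
    show (if 1 ≤ z.1 ∧ z.1 ≤ (n : ℤ) ∧ 1 ≤ z.2 ∧ z.2 ≤ (n : ℤ) then f z - g z else 0) = f z - g z
    rw [if_pos ⟨hz.1.1.1, hz.1.1.2, hz.1.2.1, hz.1.2.2⟩]
  rw [e1, e2, e3, hclue]

/-! ### The direction families -/

def As : ℕ → List (ℤ × ℤ)
  | 0 => []
  | m + 1 => (1, -(m : ℤ) - 2) :: As m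

def Bs : ℕ → List (ℤ × ℤ)
  | 0 => []
  | m + 1 => Bs m ++ [((m : ℤ) + 1, -1)]

def Ds : ℕ → List (ℤ × ℤ)
  | 0 => []
  | m + 1 => ((m : ℤ) + 1, 1) :: Ds m

def Es : ℕ → List (ℤ × ℤ)
  | 0 => []
  | m + 1 => Es m ++ [(1, (m : ℤ) + 2)]

def dirList (q : ℕ) : List (ℤ × ℤ) :=
  As (q - 2) ++ Bs q ++ [(1, 0)] ++ Ds (q - 1) ++ Es (q - 2)

lemma mem_As {m : ℕ} {x : ℤ × ℤ} : x ∈ As m ↔ ∃ j : ℕ, j < m ∧ x = (1, -(j : ℤ) - 2) := by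
  induction m with
  | zero => simp [As]
  | succ m ih =>
    simp only [As, List.mem_cons, ih]
    constructor
    · rintro (rfl | ⟨j, hj, rfl⟩)
      exacts [⟨m, by omega, rfl⟩, ⟨j, by omega, rfl⟩]
    · rintro ⟨j, hj, rfl⟩
      rcases Nat.lt_succ_iff_lt_or_eq.mp hj with h | rfl
      exacts [Or.inr ⟨j, h, rfl⟩, Or.inl rfl]

lemma mem_Bs {m : ℕ} {x : ℤ × ℤ} : x ∈ Bs m ↔ ∃ j : ℕ, j < m ∧ x = ((j : ℤ) + 1, -1) := by
  induction m with
  | zero => simp [Bs]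
  | succ m ih =>
    simp only [Bs, List.mem_append, List.mem_singleton, ih]
    constructor
    · rintro (⟨j, hj, rfl⟩ | rfl)
      exacts [⟨j, by omega, rfl⟩, ⟨m, by omega, rfl⟩]
    · rintro ⟨j, hj, rfl⟩
      rcases Nat.lt_succ_iff_lt_or_eq.mp hj with h | rfl
      exacts [Or.inl ⟨j, h, rfl⟩, Or.inr rfl]

lemma mem_Ds {m : ℕ} {x : ℤ × ℤ} : x ∈ Ds m ↔ ∃ j : ℕ, j < m ∧ x = ((j : ℤ) + 1, 1) := by
  induction m with
  | zero => simp [Ds]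
  | succ m ih =>
    simp only [Ds, List.mem_cons, ih]
    constructor
    · rintro (rfl | ⟨j, hj, rfl⟩)
      exacts [⟨m, by omega, rfl⟩, ⟨j, by omega, rfl⟩]
    · rintro ⟨j, hj, rfl⟩
      rcases Nat.lt_succ_iff_lt_or_eq.mp hj with h | rfl
      exacts [Or.inr ⟨j, h, rfl⟩, Or.inl rfl]

lemma mem_Es {m : ℕ} {x : ℤ × ℤ} : x ∈ Es m ↔ ∃ j : ℕ, j < m ∧ x = (1, (j : ℤ) + 2) := by
  induction m with
  | zero => simp [Es]
  | succ m ih =>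
    simp only [Es, List.mem_append, List.mem_singleton, ih]
    constructor
    · rintro (⟨j, hj, rfl⟩ | rfl)
      exacts [⟨j, by omega, rfl⟩, ⟨m, by omega, rfl⟩]
    · rintro ⟨j, hj, rfl⟩
      rcases Nat.lt_succ_iff_lt_or_eq.mp hj with h | rfl
      exacts [Or.inl ⟨j, h, rfl⟩, Or.inr rfl]

/-! ### sums of first coordinates -/

lemma sum_fst_As (m : ℕ) : ((As m).map Prod.fst).sum = (m : ℤ) := by
  induction m with
  | zero => simp [As]
  | succ m ih => simp [As, ih]; ring

lemma sum_fst_Bs (m : ℕ) : 2 * ((Bs m).map Prod.fst).sum = (m : ℤ) * ((m : ℤ) + 1) := by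
  induction m with
  | zero => simp [Bs]
  | succ m ih =>
    simp only [Bs, List.map_append, List.sum_append, List.map_cons, List.map_nil,
      List.sum_cons, List.sum_nil]
    push_cast
    push_cast at ih
    nlinarith [ih]

lemma sum_fst_Ds (m : ℕ) : 2 * ((Ds m).map Prod.fst).sum = (m : ℤ) * ((m : ℤ) + 1) := by
  induction m with
  | zero => simp [Ds]
  | succ m ih =>
    simp only [Ds, List.map_cons, List.sum_cons]
    push_cast
    push_cast at ih
    nlinarith [ih]

lemma sum_fst_Es (m : ℕ) : ((Es m).map Prod.fst).sum = (m : ℤ) := by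
  induction m with
  | zero => simp [Es]
  | succ m ih => simp [Es, ih]

/-! ### pairwise increasing slopes -/

/-- `u` has strictly smaller slope than `v` (cross-multiplied form; denominators positive). -/
def SlopeLt (u v : ℤ × ℤ) : Prop := u.2 * v.1 < v.2 * u.1

lemma pairwise_As (m : ℕ) : (As m).Pairwise SlopeLt := by
  induction m with
  | zero => simp [As]
  | succ m ih =>
    refine List.Pairwise.cons ?_ ih
    intro y hy
    obtain ⟨j, hj, rfl⟩ := mem_As.mp hy
    show (-(m : ℤ) - 2) * 1 < (-(j : ℤ) - 2) * 1
    push_cast; omega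

lemma pairwise_Bs (m : ℕ) : (Bs m).Pairwise SlopeLt := by
  induction m with
  | zero => simp [Bs]
  | succ m ih =>
    rw [Bs, List.pairwise_append]
    refine ⟨ih, List.pairwise_singleton _ _, ?_⟩
    intro x hx y hy
    obtain ⟨j, hj, rfl⟩ := mem_Bs.mp hx
    rw [List.mem_singleton] at hy
    subst hy
    show (-1 : ℤ) * ((m : ℤ) + 1) < -1 * ((j : ℤ) + 1)
    push_cast; omega

lemma pairwise_Ds (m : ℕ) : (Ds m).Pairwise SlopeLt := by
  induction m with
  | zero => simp [Ds]
  | succ m ih =>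
    refine List.Pairwise.cons ?_ ih
    intro y hy
    obtain ⟨j, hj, rfl⟩ := mem_Ds.mp hy
    show (1 : ℤ) * ((j : ℤ) + 1) < 1 * ((m : ℤ) + 1)
    push_cast; omega

lemma pairwise_Es (m : ℕ) : (Es m).Pairwise SlopeLt := by
  induction m with
  | zero => simp [Es]
  | succ m ih =>
    rw [Es, List.pairwise_append]
    refine ⟨ih, List.pairwise_singleton _ _, ?_⟩
    intro x hx y hy
    obtain ⟨j, hj, rfl⟩ := mem_Es.mp hx
    rw [List.mem_singleton] at hy
    subst hy
    show ((j : ℤ) + 2) * 1 < ((m : ℤ) + 2) * 1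
    push_cast; omega

lemma pairwise_dirList (q : ℕ) : (dirList q).Pairwise SlopeLt := by
  rw [dirList]
  rw [List.pairwise_append, List.pairwise_append, List.pairwise_append, List.pairwise_append]
  refine ⟨⟨⟨⟨pairwise_As _, pairwise_Bs _, ?_⟩, List.pairwise_singleton _ _, ?_⟩,
    pairwise_Ds _, ?_⟩, pairwise_Es _, ?_⟩
  · -- As vs Bs
    intro x hx y hy
    obtain ⟨j, hj, rfl⟩ := mem_As.mp hx
    obtain ⟨i, hi, rfl⟩ := mem_Bs.mp hy
    show (-(j : ℤ) - 2) * ((i : ℤ) + 1) < -1 * 1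
    have h1 : (0 : ℤ) ≤ (j : ℤ) := Int.ofNat_nonneg j
    have h2 : (0 : ℤ) ≤ (i : ℤ) := Int.ofNat_nonneg i
    nlinarith
  · -- (As ++ Bs) vs [(1,0)]
    intro x hx y hy
    rw [List.mem_singleton] at hy; subst hy
    rw [List.mem_append] at hx
    rcases hx with hx | hx
    · obtain ⟨j, hj, rfl⟩ := mem_As.mp hx
      show (-(j : ℤ) - 2) * 1 < 0 * 1
      have h1 : (0 : ℤ) ≤ (j : ℤ) := Int.ofNat_nonneg j
      omega
    · obtain ⟨j, hj, rfl⟩ := mem_Bs.mp hx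
      show (-1 : ℤ) * 1 < 0 * ((j : ℤ) + 1)
      omega
  · -- (As ++ Bs ++ [(1,0)]) vs Ds
    intro x hx y hy
    obtain ⟨i, hi, rfl⟩ := mem_Ds.mp hy
    have h2 : (0 : ℤ) ≤ (i : ℤ) := Int.ofNat_nonneg i
    rw [List.mem_append, List.mem_append] at hx
    rcases hx with (hx | hx) | hx
    · obtain ⟨j, hj, rfl⟩ := mem_As.mp hx
      show (-(j : ℤ) - 2) * ((i : ℤ) + 1) < 1 * 1
      have h1 : (0 : ℤ) ≤ (j : ℤ) := Int.ofNat_nonneg j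
      nlinarith
    · obtain ⟨j, hj, rfl⟩ := mem_Bs.mp hx
      show (-1 : ℤ) * ((i : ℤ) + 1) < 1 * ((j : ℤ) + 1)
      have h1 : (0 : ℤ) ≤ (j : ℤ) := Int.ofNat_nonneg j
      omega
    · rw [List.mem_singleton] at hx; subst hx
      show (0 : ℤ) * ((i : ℤ) + 1) < 1 * 1
      omega
  · -- everything vs Es
    intro x hx y hy
    obtain ⟨i, hi, rfl⟩ := mem_Es.mp hy
    have h2 : (0 : ℤ) ≤ (i : ℤ) := Int.ofNat_nonneg i
    rw [List.mem_append, List.mem_append, List.mem_append] at hx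
    rcases hx with ((hx | hx) | hx) | hx
    · obtain ⟨j, hj, rfl⟩ := mem_As.mp hx
      show (-(j : ℤ) - 2) * 1 < ((i : ℤ) + 2) * 1
      have h1 : (0 : ℤ) ≤ (j : ℤ) := Int.ofNat_nonneg j
      omega
    · obtain ⟨j, hj, rfl⟩ := mem_Bs.mp hx
      show (-1 : ℤ) * 1 < ((i : ℤ) + 2) * ((j : ℤ) + 1)
      have h1 : (0 : ℤ) ≤ (j : ℤ) := Int.ofNat_nonneg j
      nlinarith
    · rw [List.mem_singleton] at hx; subst hx
      show (0 : ℤ) * 1 < ((i : ℤ) + 2) * 1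
      omega
    · obtain ⟨j, hj, rfl⟩ := mem_Ds.mp hx
      show (1 : ℤ) * 1 < ((i : ℤ) + 2) * ((j : ℤ) + 1)
      have h1 : (0 : ℤ) ≤ (j : ℤ) := Int.ofNat_nonneg j
      nlinarith

lemma pairwise_det (q : ℕ) :
    (dirList q).Pairwise (fun d e => d.1 * e.2 ≠ d.2 * e.1) := by
  refine (pairwise_dirList q).imp ?_
  intro d e hR
  rw [mul_comm d.1 e.2]
  exact (ne_of_gt hR)

lemma mem_dirList {q : ℕ} {x : ℤ × ℤ} (hx : x ∈ dirList q) :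
    (∃ j : ℕ, j < q - 2 ∧ x = (1, -(j : ℤ) - 2)) ∨
    (∃ j : ℕ, j < q ∧ x = ((j : ℤ) + 1, -1)) ∨
    (x = (1, 0)) ∨
    (∃ j : ℕ, j < q - 1 ∧ x = ((j : ℤ) + 1, 1)) ∨
    (∃ j : ℕ, j < q - 2 ∧ x = (1, (j : ℤ) + 2)) := by
  rw [dirList] at hx
  simp only [List.mem_append, List.mem_singleton] at hx
  rcases hx with (((hx | hx) | hx) | hx) | hx
  exacts [Or.inl (mem_As.mp hx), Or.inr (Or.inl (mem_Bs.mp hx)),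
    Or.inr (Or.inr (Or.inl hx)), Or.inr (Or.inr (Or.inr (Or.inl (mem_Ds.mp hx)))),
    Or.inr (Or.inr (Or.inr (Or.inr (mem_Es.mp hx))))]

lemma fst_pos_dirList {q : ℕ} {x : ℤ × ℤ} (hx : x ∈ dirList q) : 1 ≤ x.1 := by
  rcases mem_dirList hx with ⟨j, _, rfl⟩ | ⟨j, _, rfl⟩ | rfl | ⟨j, _, rfl⟩ | ⟨j, _, rfl⟩ <;>
    simp <;> positivity

lemma shape_dirList {q : ℕ} {x : ℤ × ℤ} (hx : x ∈ dirList q) :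
    x.1 = 1 ∨ x.2 = 1 ∨ x.2 = -1 := by
  rcases mem_dirList hx with ⟨j, _, rfl⟩ | ⟨j, _, rfl⟩ | rfl | ⟨j, _, rfl⟩ | ⟨j, _, rfl⟩ <;> simp

lemma sum_fst_dirList {q : ℕ} (hq : 2 ≤ q) :
    ((dirList q).map Prod.fst).sum = (q : ℤ) ^ 2 + 2 * (q : ℤ) - 3 := by
  rw [dirList]
  simp only [List.map_append, List.sum_append, List.map_cons, List.map_nil, List.sum_cons,
    List.sum_nil]
  have hA := sum_fst_As (q - 2)
  have hB := sum_fst_Bs q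
  have hD := sum_fst_Ds (q - 1)
  have hE := sum_fst_Es (q - 2)
  have hc2 : ((q - 2 : ℕ) : ℤ) = (q : ℤ) - 2 := by omega
  have hc1 : ((q - 1 : ℕ) : ℤ) = (q : ℤ) - 1 := by omega
  rw [hc2] at hA hE
  rw [hc1] at hD
  nlinarith [hA, hB, hD, hE]

lemma slope_mem_dirList {q : ℕ} (hq : 2 ≤ q) {x : ℤ × ℤ} (hx : x ∈ dirList q) :
    some ((x.2 : ℚ) / (x.1 : ℚ)) ∈ CnegInvQ q := by
  rcases mem_dirList hx with ⟨j, hj, rfl⟩ | ⟨j, hj, rfl⟩ | rfl | ⟨j, hj, rfl⟩ | ⟨j, hj, rfl⟩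
  · -- A family : slope = -(j+2), with j + 2 ≤ q - 1
    refine Set.mem_union_left _ (Set.mem_union_right _ ⟨-(j : ℤ) - 2, ?_, ?_, Or.inl ?_⟩)
    · rw [abs_of_nonpos (by omega)]; omega
    · rw [abs_of_nonpos (by omega)]; omega
    · congr 1
      push_cast
      ring
  · -- B family : slope = -1/(j+1), j + 1 ≤ q
    by_cases hjq : j + 1 = q
    · refine Set.mem_union_right _ ?_
      have hc : ((j : ℚ) + 1) = (q : ℚ) := by exact_mod_cast congrArg (fun t : ℕ => (t : ℚ)) hjq
      show some _ = some (-(1 / (q : ℚ)))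
      congr 1
      push_cast
      rw [hc]
      ring
    · refine Set.mem_union_left _ (Set.mem_union_right _ ⟨-((j : ℤ) + 1), ?_, ?_, Or.inr ?_⟩)
      · rw [abs_of_nonpos (by omega)]; omega
      · rw [abs_of_nonpos (by omega)]; omega
      · congr 1
        push_cast
        rw [div_neg, neg_div]
  · -- slope 0
    refine Set.mem_union_left _ (Set.mem_union_left _ ?_)
    have hc : (((1, 0) : ℤ × ℤ).2 : ℚ) / (((1, 0) : ℤ × ℤ).1 : ℚ) = 0 := by norm_num
    rw [hc]
    exact Set.mem_insert _ _
  · -- D family : slope = 1/(j+1), j + 1 ≤ q - 1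
    refine Set.mem_union_left _ (Set.mem_union_right _ ⟨(j : ℤ) + 1, ?_, ?_, Or.inr ?_⟩)
    · rw [abs_of_nonneg (by omega)]; omega
    · rw [abs_of_nonneg (by omega)]; omega
    · congr 1
  · -- E family : slope = j + 2
    refine Set.mem_union_left _ (Set.mem_union_right _ ⟨(j : ℤ) + 2, ?_, ?_, Or.inl ?_⟩)
    · rw [abs_of_nonneg (by omega)]; omega
    · rw [abs_of_nonneg (by omega)]; omega
    · congr 1
      push_cast
      ring
end RKAux

/-- if `q ≥ 2` and `n ≤ q² + 2q − 3`, then every entry of `I_{n,n}` is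
uniquely solvable with respect to `C_{−1/q}`; equivalently every solvable `n × n` RK puzzle
with clue slopes `C_{−1/q}` has a unique solution. -/
theorem rk_unique_CnegInvQ (q : ℕ) (hq : 2 ≤ q) (n : ℕ) (hn : 0 < n)
    (hnq : n ≤ q ^ 2 + 2 * q - 3) :
    ∀ f g : ℤ × ℤ → ℝ, ClueEquiv n n (CnegInvQ q) f g →
      ∀ p : ℤ × ℤ, 1 ≤ p.1 → p.1 ≤ (n : ℤ) → 1 ≤ p.2 → p.2 ≤ (n : ℤ) → f p = g p := by
  intro f g hce p hp1 hp2 hp3 hp4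
  set hdif : ℤ × ℤ → ℝ :=
    fun z => if 1 ≤ z.1 ∧ z.1 ≤ (n : ℤ) ∧ 1 ≤ z.2 ∧ z.2 ≤ (n : ℤ) then f z - g z else 0 with hdd
  have hsupp : RKAux.SuppIn hdif n 1 n := by
    intro z hz
    by_contra hc
    simp only [not_and_or, not_le] at hc
    apply hz
    show (if 1 ≤ z.1 ∧ z.1 ≤ (n : ℤ) ∧ 1 ≤ z.2 ∧ z.2 ≤ (n : ℤ) then f z - g z else 0) = 0
    rw [if_neg (by omega)]
  have hzero : ∀ d ∈ RKAux.dirList q, ∀ pp, RKAux.LSum hdif d pp = 0 := by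
    intro d hd pp
    exact RKAux.lsum_zero_of_clue n f g (CnegInvQ q) hce d (RKAux.fst_pos_dirList hd)
      (RKAux.shape_dirList hd) (RKAux.slope_mem_dirList hq hd) pp
  have hbound : (n : ℤ) ≤ ((RKAux.dirList q).map Prod.fst).sum := by
    rw [RKAux.sum_fst_dirList hq]
    have h8 : 3 ≤ q ^ 2 + 2 * q := by nlinarith
    have h2 : q ^ 2 + 2 * q - 3 + 3 = q ^ 2 + 2 * q := Nat.sub_add_cancel h8
    have h3 : n + 3 ≤ q ^ 2 + 2 * q := by
      calc n + 3 ≤ q ^ 2 + 2 * q - 3 + 3 := by omega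
      _ = q ^ 2 + 2 * q := h2
    have h4 : (n : ℤ) + 3 ≤ (q : ℤ) ^ 2 + 2 * (q : ℤ) := by exact_mod_cast h3
    linarith
  have hzero2 : ∀ z, hdif z = 0 :=
    RKAux.ghost_zero (RKAux.dirList q) (fun d hd => RKAux.fst_pos_dirList hd)
      (RKAux.pairwise_det q) n 1 n hdif hsupp hzero hbound
  have h := hzero2 p
  rw [show hdif p = (if 1 ≤ p.1 ∧ p.1 ≤ (n : ℤ) ∧ 1 ≤ p.2 ∧ p.2 ≤ (n : ℤ)
      then f p - g p else 0) from rfl, if_pos ⟨hp1, hp2, hp3, hp4⟩] at h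
  linarith
end

section
/- Let q ≥ 2 be an integer and let n be a positive integer with n ≤ q² + 2q − 2. Let T = C_{−q} = {0, ∞} ∪ {k : k ∈ ℤ, 1 ≤ |k| ≤ q−1} ∪ {1/k : k ∈ ℤ, 1 ≤ |k| ≤ q−1} ∪ {−1/q, −q}. Then any two functions f, g : ℤ² → ℝ that are T-clue-equivalent on I_{n,n} agree at every point of I_{n,n}; equivalently, every solvable n × n RK puzzle with clue slopes T has a unique solution. -/
open Classical

/-- The slope set `C_{−q} = {0, ∞} ∪ {±k, ±1/k : 1 ≤ k ≤ q−1} ∪ {−1/q, −q}`. -/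
def CnegQ (q : ℕ) : Set Slope :=
  ({some 0, none} ∪
    {s | ∃ k : ℤ, 1 ≤ |k| ∧ |k| ≤ (q : ℤ) - 1 ∧ (s = some (k : ℚ) ∨ s = some (1 / (k : ℚ)))}) ∪
  {some (-(1 / (q : ℚ))), some (-(q : ℚ))}

lemma sum_natAbs_Icc : ∀ m : ℕ, 1 ≤ m →
    2 * (∑ k ∈ Finset.Icc (2:ℤ) (m:ℤ), k.natAbs) + 2 = m * m + m := by
  intro m
  induction m with
  | zero => omega
  | succ m ih =>
    intro _
    by_cases hm1 : 1 ≤ m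
    · have hins : Finset.Icc (2:ℤ) ((m+1:ℕ):ℤ) = insert ((m:ℤ)+1) (Finset.Icc (2:ℤ) (m:ℤ)) := by
        ext x
        simp only [Finset.mem_Icc, Finset.mem_insert]
        push_cast
        omega
      rw [hins, Finset.sum_insert (by simp only [Finset.mem_Icc]; omega)]
      have h2 := ih hm1
      have habs : ((m:ℤ)+1).natAbs = m+1 := by omega
      rw [habs]
      linarith [h2]
    · have hm0 : m = 0 := by omega
      subst hm0
      rw [show ((0+1:ℕ):ℤ) = 1 by norm_num,
        show Finset.Icc (2:ℤ) 1 = ∅ from Finset.Icc_eq_empty (by norm_num)]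
      simp
lemma sum_natAbs_neg (a b : ℤ) :
    ∑ k ∈ Finset.Icc (-b) (-a), k.natAbs = ∑ k ∈ Finset.Icc a b, k.natAbs := by
  rw [show Finset.Icc (-b) (-a) = (Finset.Icc a b).image (fun k => -k) from ?_]
  · rw [Finset.sum_image (by intro x _ y _ hxy; exact neg_injective hxy)]
    simp [Int.natAbs_neg]
  · ext x
    simp only [Finset.mem_image, Finset.mem_Icc]
    constructor
    · intro hx; exact ⟨-x, by omega, by omega⟩
    · rintro ⟨k, hk, rfl⟩; omega

lemma memb_int (q : ℕ) (hq : 2 ≤ q) (k : ℤ) (hk1 : -(q:ℤ) ≤ k) (hk2 : k ≤ (q:ℤ) - 1) :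
    (some ((k:ℚ)) : Option ℚ) ∈ CnegQ q := by
  by_cases hk0 : k = 0
  · subst hk0
    left; left; left
    norm_num
  by_cases hkq : k = -(q:ℤ)
  · subst hkq
    right
    right
    simp only [Set.mem_singleton_iff]
    push_cast
    ring_nf
  · left; right
    refine ⟨k, ?_, ?_, Or.inl rfl⟩
    · rw [le_abs]; omega
    · rw [abs_le]; omega

lemma memb_inv (q : ℕ) (hq : 2 ≤ q) (k : ℤ) (hk1 : -(q:ℤ) ≤ k) (hk2 : k ≤ (q:ℤ) - 1)
    (hk3 : 2 ≤ |k|) : (some (((k:ℚ))⁻¹) : Option ℚ) ∈ CnegQ q := by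
  rcases le_abs.mp hk3 with hcase | hcase
  · -- 2 ≤ k
    left; right
    refine ⟨k, le_abs.mpr (Or.inl (by omega)), abs_le.mpr ⟨by omega, by omega⟩,
      Or.inr (by rw [one_div])⟩
  · -- k ≤ -2
    by_cases hkq : k = -(q:ℤ)
    · subst hkq
      right
      have heq : (((-(q:ℤ)):ℚ))⁻¹ = -(1/(q:ℚ)) := by
        push_cast
        rw [one_div, inv_neg]
      rw [show (((-(q:ℤ)):ℤ):ℚ) = ((-(q:ℤ)):ℚ) from rfl, heq]
      exact Set.mem_insert _ _
    · left; right
      refine ⟨k, le_abs.mpr (Or.inr (by omega)), abs_le.mpr ⟨by omega, by omega⟩,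
        Or.inr (by rw [one_div])⟩

/-- On the extreme line of slope `r`, two support points. -/
lemma exists_pair (n : ℕ) (h : ℤ × ℤ → ℝ) (r : ℚ)
    (Hr : ∀ c : ℝ, clueSum n n (some r) c h = 0)
    (S : Finset (ℤ × ℤ))
    (hS : S = (Finset.Icc (1:ℤ) n ×ˢ Finset.Icc (1:ℤ) n).filter (fun p => h p ≠ 0))
    (hne : S.Nonempty) :
    ∃ P Q : ℤ × ℤ, P ∈ S ∧ Q ∈ S ∧ P.1 < Q.1 ∧ (r.den : ℤ) ≤ Q.1 - P.1 ∧
      r.num * Q.1 - (r.den:ℤ) * Q.2 = r.num * P.1 - (r.den:ℤ) * P.2 ∧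
      ∀ p ∈ S, r.num * p.1 - (r.den:ℤ) * p.2 ≤ r.num * P.1 - (r.den:ℤ) * P.2 := by
  obtain ⟨P0, hP0, hmax⟩ := S.exists_max_image (fun p => r.num * p.1 - (r.den:ℤ) * p.2) hne
  set c : ℝ := (P0.2 : ℝ) - (r:ℝ) * P0.1 with hc
  have hdenpos : (0:ℝ) < (r.den : ℝ) := by exact_mod_cast r.pos
  have hnum : (r:ℝ) * (r.den : ℝ) = (r.num : ℝ) := by
    rw [Rat.cast_def]; field_simp
  have key : ∀ p : ℤ × ℤ, ((p.2:ℝ) = (r:ℝ) * (p.1:ℝ) + c) ↔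
      (r.num * p.1 - (r.den:ℤ) * p.2 = r.num * P0.1 - (r.den:ℤ) * P0.2) := by
    intro p
    constructor
    · intro hp
      have : (r.num:ℝ) * p.1 - (r.den:ℝ) * p.2 = (r.num:ℝ) * P0.1 - (r.den:ℝ) * P0.2 := by
        rw [hc] at hp
        linear_combination (-(r.den:ℝ)) * hp + ((P0.1:ℝ) - (p.1:ℝ)) * hnum
      exact_mod_cast this
    · intro hp
      have hp' : (r.num:ℝ) * p.1 - (r.den:ℝ) * p.2 = (r.num:ℝ) * P0.1 - (r.den:ℝ) * P0.2 := by
        exact_mod_cast hp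
      rw [hc]
      have hne' : (r.den:ℝ) ≠ 0 := ne_of_gt hdenpos
      have hmul : (r.den:ℝ) * (p.2:ℝ) = (r.den:ℝ) * ((r:ℝ) * (p.1:ℝ) + ((P0.2:ℝ) - (r:ℝ) * (P0.1:ℝ))) := by
        linear_combination (-1 : ℝ) * hp' + ((P0.1:ℝ) - (p.1:ℝ)) * hnum
      exact mul_left_cancel₀ hne' hmul
  -- the clue along the extreme line vanishes
  have hclue := Hr c
  rw [clueSum] at hclue
  set G := (Finset.Icc (1:ℤ) (n:ℤ) ×ˢ Finset.Icc (1:ℤ) (n:ℤ)) with hG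
  have hfilter : (G.filter (fun p => (p.2:ℝ) = (r:ℝ) * (p.1:ℝ) + c)) =
      G.filter (fun p => r.num * p.1 - (r.den:ℤ) * p.2 = r.num * P0.1 - (r.den:ℤ) * P0.2) := by
    apply Finset.filter_congr
    intro p _
    simpa using key p
  rw [hfilter] at hclue
  -- restrict the sum to the support
  have hsum2 : ∑ p ∈ (G.filter (fun p => r.num * p.1 - (r.den:ℤ) * p.2 = r.num * P0.1 - (r.den:ℤ) * P0.2)).filter (fun p => h p ≠ 0), h p = 0 := by
    rw [Finset.sum_filter_ne_zero] ; exact hclue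
  set A := (G.filter (fun p => r.num * p.1 - (r.den:ℤ) * p.2 = r.num * P0.1 - (r.den:ℤ) * P0.2)).filter (fun p => h p ≠ 0) with hA
  have hP0G : P0 ∈ G := by
    have := hP0; rw [hS] at this; exact Finset.mem_of_mem_filter _ this
  have hP0ne : h P0 ≠ 0 := by
    have := hP0; rw [hS] at this; exact (Finset.mem_filter.mp this).2
  have hP0A : P0 ∈ A := by
    rw [hA]
    refine Finset.mem_filter.mpr ⟨Finset.mem_filter.mpr ⟨hP0G, rfl⟩, hP0ne⟩
  have hAS : ∀ p ∈ A, p ∈ S ∧ r.num * p.1 - (r.den:ℤ) * p.2 = r.num * P0.1 - (r.den:ℤ) * P0.2 := by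
    intro p hp
    rw [hA] at hp
    obtain ⟨hp1, hp2⟩ := Finset.mem_filter.mp hp
    obtain ⟨hpG, hpl⟩ := Finset.mem_filter.mp hp1
    exact ⟨by rw [hS]; exact Finset.mem_filter.mpr ⟨hpG, hp2⟩, hpl⟩
  -- find a second point
  have hQ : ∃ Q ∈ A, Q ≠ P0 := by
    by_contra hcon
    push_neg at hcon
    have hAeq : A = {P0} := by
      apply Finset.eq_singleton_iff_unique_mem.mpr
      exact ⟨hP0A, fun x hx => hcon x hx⟩
    rw [hAeq, Finset.sum_singleton] at hsum2
    exact hP0ne hsum2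
  obtain ⟨Q0, hQ0A, hQ0ne⟩ := hQ
  obtain ⟨hQ0S, hQ0l⟩ := hAS Q0 hQ0A
  -- Q0.1 ≠ P0.1
  have hx : Q0.1 ≠ P0.1 := by
    intro hxx
    apply hQ0ne
    have : (r.den:ℤ) * Q0.2 = (r.den:ℤ) * P0.2 := by
      have := hQ0l; rw [hxx] at this; linarith
    have hy : Q0.2 = P0.2 := by
      have hd : (r.den:ℤ) ≠ 0 := by exact_mod_cast r.den_nz
      exact mul_left_cancel₀ hd this
    exact Prod.ext hxx hy
  -- order the pair so the x step is positive, divisibility gives step ≥ den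
  have hcop : Int.gcd (r.den:ℤ) r.num = 1 := by
    have := r.reduced
    simpa [Int.gcd, Nat.coprime_comm] using this
  have main : ∀ P Q : ℤ × ℤ, P ∈ S → Q ∈ S → P.1 < Q.1 →
      (r.num * Q.1 - (r.den:ℤ) * Q.2 = r.num * P.1 - (r.den:ℤ) * P.2) →
      (r.num * P.1 - (r.den:ℤ) * P.2 = r.num * P0.1 - (r.den:ℤ) * P0.2) →
      ∃ P' Q' : ℤ × ℤ, P' ∈ S ∧ Q' ∈ S ∧ P'.1 < Q'.1 ∧ (r.den : ℤ) ≤ Q'.1 - P'.1 ∧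
      r.num * Q'.1 - (r.den:ℤ) * Q'.2 = r.num * P'.1 - (r.den:ℤ) * P'.2 ∧
      ∀ p ∈ S, r.num * p.1 - (r.den:ℤ) * p.2 ≤ r.num * P'.1 - (r.den:ℤ) * P'.2 := by
    intro P Q hPS hQS hlt hline hlevel
    refine ⟨P, Q, hPS, hQS, hlt, ?_, hline, ?_⟩
    · have hdvd : (r.den:ℤ) ∣ (Q.1 - P.1) * r.num := ⟨Q.2 - P.2, by ring_nf; linarith [hline]⟩
      have hdvd2 : (r.den:ℤ) ∣ (Q.1 - P.1) := Int.dvd_of_dvd_mul_left_of_gcd_one hdvd hcop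
      exact Int.le_of_dvd (by omega) hdvd2
    · intro p hp
      rw [hlevel]
      exact hmax p hp
  rcases lt_or_gt_of_ne hx with hlt | hlt
  · exact main Q0 P0 hQ0S hP0 hlt hQ0l.symm hQ0l
  · exact main P0 Q0 hP0 hQ0S hlt hQ0l rfl

/-- Supporting segments of distinct slopes have x-projections with disjoint interiors. -/
lemma intervals_disjoint (S : Finset (ℤ × ℤ)) (r r' : ℚ) (hrr : r ≠ r')
    (P Q P' Q' : ℤ × ℤ) (hP' : P' ∈ S) (hQ' : Q' ∈ S) (hPm : P ∈ S) (hQm : Q ∈ S)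
    (hlt : P.1 < Q.1) (hlt' : P'.1 < Q'.1)
    (hline : r.num * Q.1 - (r.den:ℤ) * Q.2 = r.num * P.1 - (r.den:ℤ) * P.2)
    (hline' : r'.num * Q'.1 - (r'.den:ℤ) * Q'.2 = r'.num * P'.1 - (r'.den:ℤ) * P'.2)
    (hmax : ∀ p ∈ S, r.num * p.1 - (r.den:ℤ) * p.2 ≤ r.num * P.1 - (r.den:ℤ) * P.2)
    (hmax' : ∀ p ∈ S, r'.num * p.1 - (r'.den:ℤ) * p.2 ≤ r'.num * P'.1 - (r'.den:ℤ) * P'.2) :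
    Q.1 ≤ P'.1 ∨ Q'.1 ≤ P.1 := by
  by_contra hcon
  push_neg at hcon
  obtain ⟨h1, h2⟩ := hcon
  -- rational reformulation
  have hd : (0:ℚ) < (r.den:ℚ) := by exact_mod_cast r.pos
  have hd' : (0:ℚ) < (r'.den:ℚ) := by exact_mod_cast r'.pos
  have hnumq : (r.num:ℚ) = r * (r.den:ℚ) := by
    have h := Rat.num_div_den r
    rw [div_eq_iff (ne_of_gt hd)] at h
    exact h
  have hnumq' : (r'.num:ℚ) = r' * (r'.den:ℚ) := by
    have h := Rat.num_div_den r'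
    rw [div_eq_iff (ne_of_gt hd')] at h
    exact h
  set m : ℚ := r * P.1 - P.2 with hm
  set m' : ℚ := r' * P'.1 - P'.2 with hm'
  have habove : ∀ p : ℤ × ℤ, p ∈ S → r * (p.1:ℚ) - (p.2:ℚ) ≤ m := by
    intro p hp
    have h1 : (r.num:ℚ) * p.1 - (r.den:ℚ) * p.2 ≤ (r.num:ℚ) * P.1 - (r.den:ℚ) * P.2 := by
      exact_mod_cast hmax p hp
    have e1 : (r.den:ℚ) * (r * p.1 - p.2) = (r.num:ℚ) * p.1 - (r.den:ℚ) * p.2 := by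
      linear_combination (-(p.1:ℚ)) * hnumq
    have e2 : (r.den:ℚ) * (r * P.1 - P.2) = (r.num:ℚ) * P.1 - (r.den:ℚ) * P.2 := by
      linear_combination (-(P.1:ℚ)) * hnumq
    have : (r.den:ℚ) * (r * p.1 - p.2) ≤ (r.den:ℚ) * (r * P.1 - P.2) := by
      rw [e1, e2]; exact h1
    exact le_of_mul_le_mul_left this hd
  have habove' : ∀ p : ℤ × ℤ, p ∈ S → r' * (p.1:ℚ) - (p.2:ℚ) ≤ m' := by
    intro p hp
    have h1 : (r'.num:ℚ) * p.1 - (r'.den:ℚ) * p.2 ≤ (r'.num:ℚ) * P'.1 - (r'.den:ℚ) * P'.2 := by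
      exact_mod_cast hmax' p hp
    have e1 : (r'.den:ℚ) * (r' * p.1 - p.2) = (r'.num:ℚ) * p.1 - (r'.den:ℚ) * p.2 := by
      linear_combination (-(p.1:ℚ)) * hnumq'
    have e2 : (r'.den:ℚ) * (r' * P'.1 - P'.2) = (r'.num:ℚ) * P'.1 - (r'.den:ℚ) * P'.2 := by
      linear_combination (-(P'.1:ℚ)) * hnumq'
    have : (r'.den:ℚ) * (r' * p.1 - p.2) ≤ (r'.den:ℚ) * (r' * P'.1 - P'.2) := by
      rw [e1, e2]; exact h1
    exact le_of_mul_le_mul_left this hd'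
  have honline : r * (Q.1:ℚ) - (Q.2:ℚ) = m := by
    have h1 : (r.num:ℚ) * Q.1 - (r.den:ℚ) * Q.2 = (r.num:ℚ) * P.1 - (r.den:ℚ) * P.2 := by
      exact_mod_cast hline
    have : (r.den:ℚ) * (r * Q.1 - Q.2) = (r.den:ℚ) * (r * P.1 - P.2) := by
      linear_combination h1 + ((P.1:ℚ) - (Q.1:ℚ)) * hnumq
    exact mul_left_cancel₀ (ne_of_gt hd) this
  have honline' : r' * (Q'.1:ℚ) - (Q'.2:ℚ) = m' := by
    have h1 : (r'.num:ℚ) * Q'.1 - (r'.den:ℚ) * Q'.2 = (r'.num:ℚ) * P'.1 - (r'.den:ℚ) * P'.2 := by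
      exact_mod_cast hline'
    have : (r'.den:ℚ) * (r' * Q'.1 - Q'.2) = (r'.den:ℚ) * (r' * P'.1 - P'.2) := by
      linear_combination h1 + ((P'.1:ℚ) - (Q'.1:ℚ)) * hnumq'
    exact mul_left_cancel₀ (ne_of_gt hd') this
  -- the affine gap function
  set D : ℤ → ℚ := fun x => (r - r') * (x:ℚ) + (m' - m) with hD
  have hDa : 0 ≤ D P.1 := by
    have hh := habove' P hPm
    simp only [hD, hm]
    linarith
  have hDb : 0 ≤ D Q.1 := by
    have hh := habove' Q hQm
    simp only [hD]
    linarith [honline]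
  have hDa' : D P'.1 ≤ 0 := by
    have hh := habove P' hP'
    simp only [hD, hm']
    linarith
  have hDb' : D Q'.1 ≤ 0 := by
    have hh := habove Q' hQ'
    simp only [hD]
    linarith [honline']
  set u : ℤ := max P.1 P'.1 with hu
  set v : ℤ := min Q.1 Q'.1 with hv
  have huv : u < v := by omega
  -- D is affine: nonneg on [P.1,Q.1], nonpos on [P'.1,Q'.1]; u,v lie in both
  have interp : ∀ a b x : ℤ, a ≤ x → x ≤ b → a < b → 0 ≤ D a → 0 ≤ D b → 0 ≤ D x := by
    intro a b x hax hxb hab ha hb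
    have hkey : D x * ((b:ℚ) - a) = D a * ((b:ℚ) - x) + D b * ((x:ℚ) - a) := by
      simp only [hD]; ring
    have hba : (0:ℚ) < (b:ℚ) - a := by
      have : (a:ℚ) < (b:ℚ) := by exact_mod_cast hab
      linarith
    have hbx : (0:ℚ) ≤ (b:ℚ) - x := by
      have : (x:ℚ) ≤ (b:ℚ) := by exact_mod_cast hxb
      linarith
    have hxa : (0:ℚ) ≤ (x:ℚ) - a := by
      have : (a:ℚ) ≤ (x:ℚ) := by exact_mod_cast hax
      linarith
    have hmm : 0 ≤ D x * ((b:ℚ) - a) := by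
      rw [hkey]; exact add_nonneg (mul_nonneg ha hbx) (mul_nonneg hb hxa)
    exact (mul_nonneg_iff_of_pos_right hba).mp hmm
  have interp' : ∀ a b x : ℤ, a ≤ x → x ≤ b → a < b → D a ≤ 0 → D b ≤ 0 → D x ≤ 0 := by
    intro a b x hax hxb hab ha hb
    have hkey : D x * ((b:ℚ) - a) = D a * ((b:ℚ) - x) + D b * ((x:ℚ) - a) := by
      simp only [hD]; ring
    have hba : (0:ℚ) < (b:ℚ) - a := by
      have : (a:ℚ) < (b:ℚ) := by exact_mod_cast hab
      linarith
    have hbx : (0:ℚ) ≤ (b:ℚ) - x := by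
      have : (x:ℚ) ≤ (b:ℚ) := by exact_mod_cast hxb
      linarith
    have hxa : (0:ℚ) ≤ (x:ℚ) - a := by
      have : (a:ℚ) ≤ (x:ℚ) := by exact_mod_cast hax
      linarith
    have hmm : D x * ((b:ℚ) - a) ≤ 0 := by
      rw [hkey]
      have := mul_nonpos_of_nonpos_of_nonneg ha hbx
      have := mul_nonpos_of_nonpos_of_nonneg hb hxa
      linarith
    by_contra hpos
    push_neg at hpos
    nlinarith
  have hu1 : 0 ≤ D u := interp P.1 Q.1 u (le_max_left _ _) (by omega) hlt hDa hDb
  have hu2 : D u ≤ 0 := interp' P'.1 Q'.1 u (le_max_right _ _) (by omega) hlt' hDa' hDb'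
  have hv1 : 0 ≤ D v := interp P.1 Q.1 v (by omega) (min_le_left _ _) hlt hDa hDb
  have hv2 : D v ≤ 0 := interp' P'.1 Q'.1 v (by omega) (min_le_right _ _) hlt' hDa' hDb'
  have hDu : D u = 0 := le_antisymm hu2 hu1
  have hDv : D v = 0 := le_antisymm hv2 hv1
  have hrr0 : r - r' ≠ 0 := sub_ne_zero_of_ne hrr
  have huvq : (u:ℚ) ≠ (v:ℚ) := by
    intro hh
    exact absurd (by exact_mod_cast hh : u = v) (by omega)
  apply huvq
  have : (r - r') * ((u:ℚ) - (v:ℚ)) = 0 := by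
    have := sub_eq_zero_of_eq (hDu.trans hDv.symm)
    simp only [hD] at this
    linear_combination hDu - hDv
  have := mul_eq_zero.mp this
  rcases this with hbad | hgood
  · exact absurd hbad hrr0
  · linarith [sub_eq_zero.mp hgood]

/-- if `q ≥ 2` and `n ≤ q² + 2q − 2`, then every entry of `I_{n,n}` is
uniquely solvable with respect to `C_{−q}`; equivalently every solvable `n × n` RK puzzle
with clue slopes `C_{−q}` has a unique solution. -/
theorem rk_unique_CnegQ (q : ℕ) (hq : 2 ≤ q) (n : ℕ) (hn : 0 < n)
    (hnq : n ≤ q ^ 2 + 2 * q - 2) :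
    ∀ f g : ℤ × ℤ → ℝ, ClueEquiv n n (CnegQ q) f g →
      ∀ p : ℤ × ℤ, 1 ≤ p.1 → p.1 ≤ (n : ℤ) → 1 ≤ p.2 → p.2 ≤ (n : ℤ) → f p = g p := by
  have hfg' : ∀ f g : ℤ × ℤ → ℝ, ClueEquiv n n (CnegQ q) f g → (∀ s ∈ CnegQ q, ∀ c : ℝ, clueSum n n s c f = clueSum n n s c g) := fun _ _ hh => hh
  intro f g hfg0 p hp1 hp2 hp3 hp4
  by_contra hne0
  set h : ℤ × ℤ → ℝ := fun z => f z - g z with hh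
  have hhp : h p ≠ 0 := sub_ne_zero_of_ne hne0
  set S : Finset (ℤ × ℤ) :=
    (Finset.Icc (1:ℤ) n ×ˢ Finset.Icc (1:ℤ) n).filter (fun z => h z ≠ 0) with hSdef
  have hpS : p ∈ S := by
    rw [hSdef]
    exact Finset.mem_filter.mpr ⟨Finset.mem_product.mpr
      ⟨Finset.mem_Icc.mpr ⟨hp1, hp2⟩, Finset.mem_Icc.mpr ⟨hp3, hp4⟩⟩, hhp⟩
  have hSne : S.Nonempty := ⟨p, hpS⟩
  have hcoord : ∀ z ∈ S, 1 ≤ z.1 ∧ z.1 ≤ (n:ℤ) ∧ 1 ≤ z.2 ∧ z.2 ≤ (n:ℤ) := by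
    intro z hz
    rw [hSdef] at hz
    have hz2 := Finset.mem_product.mp (Finset.mem_of_mem_filter _ hz)
    obtain ⟨ha, hb⟩ := hz2
    rw [Finset.mem_Icc] at ha hb
    exact ⟨ha.1, ha.2, hb.1, hb.2⟩
  -- zero clues for the difference
  have hclue : ∀ s ∈ CnegQ q, ∀ c : ℝ, clueSum n n s c h = 0 := by
    intro s hs c
    have hlin : clueSum n n s c h = clueSum n n s c f - clueSum n n s c g := by
      simp only [clueSum, hh]
      rw [Finset.sum_sub_distrib]
    rw [hlin, hfg' f g hfg0 s hs c, sub_self]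
  -- choose extreme pairs for every admissible rational slope
  have keyA : ∀ r : ℚ, ∃ P Q : ℤ × ℤ, (some r) ∈ CnegQ q →
      (P ∈ S ∧ Q ∈ S ∧ P.1 < Q.1 ∧ (r.den : ℤ) ≤ Q.1 - P.1 ∧
        r.num * Q.1 - (r.den:ℤ) * Q.2 = r.num * P.1 - (r.den:ℤ) * P.2 ∧
        ∀ z ∈ S, r.num * z.1 - (r.den:ℤ) * z.2 ≤ r.num * P.1 - (r.den:ℤ) * P.2) := by
    intro r
    by_cases hr : (some r) ∈ CnegQ q
    · obtain ⟨P, Q, h1, h2, h3, h4, h5, h6⟩ :=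
        exists_pair n h r (fun c => hclue _ hr c) S hSdef hSne
      exact ⟨P, Q, fun _ => ⟨h1, h2, h3, h4, h5, h6⟩⟩
    · exact ⟨0, 0, fun hc => absurd hc hr⟩
  choose Pf Qf hPQ using keyA
  -- the index set of slopes
  set K : Finset ℤ := Finset.Icc (-(q:ℤ)) (-2) ∪ Finset.Icc 2 ((q:ℤ)-1) with hK
  set R1 : Finset ℚ := (Finset.Icc (-(q:ℤ)) ((q:ℤ)-1)).image (fun k : ℤ => (k:ℚ)) with hR1
  set R2 : Finset ℚ := K.image (fun k : ℤ => ((k:ℚ))⁻¹) with hR2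
  set R : Finset ℚ := R1 ∪ R2 with hR
  have hKmem : ∀ k ∈ K, -(q:ℤ) ≤ k ∧ k ≤ (q:ℤ) - 1 ∧ 2 ≤ k.natAbs := by
    intro k hk
    rw [hK, Finset.mem_union, Finset.mem_Icc, Finset.mem_Icc] at hk
    rcases hk with hk | hk
    · exact ⟨by omega, by omega, by omega⟩
    · exact ⟨by omega, by omega, by omega⟩
  have hmem : ∀ r ∈ R, (some r) ∈ CnegQ q := by
    intro r hr
    rw [hR, Finset.mem_union] at hr
    rcases hr with hr | hr
    · rw [hR1] at hr
      obtain ⟨k, hk, rfl⟩ := Finset.mem_image.mp hr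
      rw [Finset.mem_Icc] at hk
      exact memb_int q hq k hk.1 hk.2
    · rw [hR2] at hr
      obtain ⟨k, hk, rfl⟩ := Finset.mem_image.mp hr
      obtain ⟨h1, h2, h3⟩ := hKmem k hk
      refine memb_inv q hq k h1 h2 ?_
      rw [Int.abs_eq_natAbs]
      exact_mod_cast h3
  -- the disjoint intervals
  set I : ℚ → Finset ℤ := fun r : ℚ => Finset.Ico (Pf r).1 (Qf r).1 with hI
  have hsub : ∀ r ∈ R, I r ⊆ Finset.Ico (1:ℤ) (n:ℤ) := by
    intro r hr
    obtain ⟨hPS, hQS, _, _, _, _⟩ := hPQ r (hmem r hr)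
    have c1 := hcoord _ hPS
    have c2 := hcoord _ hQS
    intro j hj
    rw [hI, Finset.mem_Ico] at hj
    rw [Finset.mem_Ico]
    omega
  have hdisj : ∀ r ∈ R, ∀ r' ∈ R, r ≠ r' → Disjoint (I r) (I r') := by
    intro r hr r' hr' hrr
    obtain ⟨hPS, hQS, hlt, _, hline, hmax⟩ := hPQ r (hmem r hr)
    obtain ⟨hPS', hQS', hlt', _, hline', hmax'⟩ := hPQ r' (hmem r' hr')
    have hdd := intervals_disjoint S r r' hrr (Pf r) (Qf r) (Pf r') (Qf r')
      hPS' hQS' hPS hQS hlt hlt' hline hline' hmax hmax'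
    rw [Finset.disjoint_left]
    intro j hj hj'
    rw [hI, Finset.mem_Ico] at hj hj'
    omega
  -- counting
  have hcount : ∑ r ∈ R, r.den ≤ n - 1 := by
    have h1 : ∑ r ∈ R, r.den ≤ ∑ r ∈ R, (I r).card := by
      apply Finset.sum_le_sum
      intro r hr
      obtain ⟨_, _, hlt, hge, _, _⟩ := hPQ r (hmem r hr)
      rw [hI, Int.card_Ico]
      omega
    have h2 : ∑ r ∈ R, (I r).card = (R.biUnion I).card := (Finset.card_biUnion hdisj).symm
    have h3 : (R.biUnion I).card ≤ (Finset.Ico (1:ℤ) (n:ℤ)).card := by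
      apply Finset.card_le_card
      intro j hj
      obtain ⟨r, hr, hjr⟩ := Finset.mem_biUnion.mp hj
      exact hsub r hr hjr
    rw [Int.card_Ico] at h3
    omega
  -- computing the sum of denominators
  have hdisjR12 : Disjoint R1 R2 := by
    rw [Finset.disjoint_left]
    intro r hr hr'
    rw [hR1] at hr
    obtain ⟨k, _, rfl⟩ := Finset.mem_image.mp hr
    rw [hR2] at hr'
    obtain ⟨k', hk', heq⟩ := Finset.mem_image.mp hr'
    obtain ⟨_, _, habs⟩ := hKmem k' hk'
    have hd1 : ((k:ℚ)).den = 1 := Rat.den_intCast k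
    have hd2 : (((k':ℚ))⁻¹).den = k'.natAbs := by
      rw [Rat.inv_intCast_den, if_neg (by omega)]
    rw [← heq] at hd1
    rw [hd1] at hd2
    omega
  have hsumR1 : ∑ r ∈ R1, r.den = 2 * q := by
    rw [hR1, Finset.sum_image (by intro x _ y _ hxy; exact Int.cast_injective hxy)]
    have : ∀ k ∈ Finset.Icc (-(q:ℤ)) ((q:ℤ)-1), ((k:ℚ)).den = 1 := fun k _ => Rat.den_intCast k
    rw [Finset.sum_congr rfl this, Finset.sum_const, Int.card_Icc]
    have : ((q:ℤ) - 1 + 1 - -(q:ℤ)).toNat = 2 * q := by omega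
    rw [this]
    simp
  have hsumR2 : ∑ r ∈ R2, r.den = q * q - 2 := by
    rw [hR2, Finset.sum_image ?inj]
    case inj =>
      intro x hx y hy hxy
      obtain ⟨_, _, hax⟩ := hKmem x hx
      obtain ⟨_, _, hay⟩ := hKmem y hy
      have hx0 : (x:ℚ) ≠ 0 := by exact_mod_cast (by omega : x ≠ 0)
      have hy0 : (y:ℚ) ≠ 0 := by exact_mod_cast (by omega : y ≠ 0)
      have := inv_injective hxy
      exact_mod_cast this
    have hcongr : ∀ k ∈ K, (((k:ℚ))⁻¹).den = k.natAbs := by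
      intro k hk
      obtain ⟨_, _, habs⟩ := hKmem k hk
      rw [Rat.inv_intCast_den, if_neg (by omega)]
    rw [Finset.sum_congr rfl hcongr, hK]
    rw [Finset.sum_union (by
      rw [Finset.disjoint_left]
      intro a ha ha'
      rw [Finset.mem_Icc] at ha ha'
      omega)]
    have e1 : ∑ k ∈ Finset.Icc (-(q:ℤ)) (-2), k.natAbs
        = ∑ k ∈ Finset.Icc (2:ℤ) (q:ℤ), k.natAbs := sum_natAbs_neg 2 (q:ℤ)
    have e2 : Finset.Icc (2:ℤ) ((q:ℤ)-1) = Finset.Icc (2:ℤ) (((q-1:ℕ)):ℤ) := by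
      congr 1
      omega
    rw [e1, e2]
    have g1 := sum_natAbs_Icc q (by omega)
    have g2 := sum_natAbs_Icc (q-1) (by omega)
    have e : (q-1)*(q-1) + (q-1) + q = q*q := by
      obtain ⟨m, rfl⟩ : ∃ m, q = m+2 := ⟨q-2, by omega⟩
      simp only [show m+2-1 = m+1 from rfl]
      ring
    have g2' : 2 * (∑ k ∈ Finset.Icc (2:ℤ) (((q-1:ℕ)):ℤ), k.natAbs) + 2 + q = q * q := by
      rw [g2]
      exact e
    generalize hgen : q * q = w at g1 g2' ⊢
    omega
  have hsumR : ∑ r ∈ R, r.den = q * q + 2 * q - 2 := by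
    rw [hR, Finset.sum_union hdisjR12, hsumR1, hsumR2]
    have h4 : 4 ≤ q * q := Nat.mul_le_mul hq hq
    generalize q * q = w at h4 ⊢
    omega
  rw [hsumR] at hcount
  have hpow : q ^ 2 = q * q := by ring
  rw [hpow] at hnq
  generalize hgen : q * q = w at hnq hcount
  omega
end

section
/- Let q ≥ 2 be an integer and let n be a positive integer with n ≤ q² + 3q − 2. Let T = C_{1/q} = {0, ∞} ∪ {k : k ∈ ℤ, 1 ≤ |k| ≤ q−1} ∪ {1/k : k ∈ ℤ, 1 ≤ |k| ≤ q−1} ∪ {−1/q, −q, 1/q}. Then any two functions f, g : ℤ² → ℝ that are T-clue-equivalent on I_{n,n} agree at every point of I_{n,n}; equivalently, every solvable n × n RK puzzle with clue slopes T has a unique solution. -/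
open Classical

/-- The slope set `C_{1/q} = {0, ∞} ∪ {±k, ±1/k : 1 ≤ k ≤ q−1} ∪ {−1/q, −q, 1/q}`. -/
def CposInvQ (q : ℕ) : Set Slope :=
  ({some 0, none} ∪
    {s | ∃ k : ℤ, 1 ≤ |k| ∧ |k| ≤ (q : ℤ) - 1 ∧ (s = some (k : ℚ) ∨ s = some (1 / (k : ℚ)))}) ∪
  {some (-(1 / (q : ℚ))), some (-(q : ℚ)), some (1 / (q : ℚ))}

namespace RKAux
def xc (d e : ℤ × ℤ) : ℤ := d.1 * e.2 - d.2 * e.1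
noncomputable def lsum (d : ℤ × ℤ) (h : ℤ × ℤ → ℝ) (p : ℤ × ℤ) : ℝ :=
  ∑ᶠ k : ℤ, h (p.1 + k * d.1, p.2 + k * d.2)
def Ghost (d : ℤ × ℤ) (h : ℤ × ℤ → ℝ) : Prop := ∀ p, lsum d h p = 0
lemma inj_param (d : ℤ × ℤ) (hd : d.1 ≠ 0) (p : ℤ × ℤ) :
    Function.Injective (fun k : ℤ => ((p.1 + k * d.1, p.2 + k * d.2) : ℤ × ℤ)) := by
  intro k k' hkk
  have h1 : p.1 + k * d.1 = p.1 + k' * d.1 := congrArg Prod.fst hkk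
  have h2 : k * d.1 = k' * d.1 := by omega
  exact mul_right_cancel₀ hd h2
lemma supp_fin (d : ℤ × ℤ) (hd : d.1 ≠ 0) {h : ℤ × ℤ → ℝ}
    (hfin : (Function.support h).Finite) (p : ℤ × ℤ) :
    (Function.support fun k : ℤ => h (p.1 + k * d.1, p.2 + k * d.2)).Finite := by
  have hsub : (Function.support fun k : ℤ => h (p.1 + k * d.1, p.2 + k * d.2))
      ⊆ (fun k : ℤ => ((p.1 + k * d.1, p.2 + k * d.2) : ℤ × ℤ)) ⁻¹' (Function.support h) :=
    fun k hk => hk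
  exact (hfin.preimage ((inj_param d hd p).injOn)).subset hsub

lemma peel (d : ℤ × ℤ) (hd : 1 ≤ d.1) {h : ℤ × ℤ → ℝ}
    (hfin : (Function.support h).Finite) (N : ℤ)
    (hs : ∀ p : ℤ × ℤ, h p ≠ 0 → 1 ≤ p.1 ∧ p.1 ≤ N) (hg : Ghost d h) :
    ∃ h' : ℤ × ℤ → ℝ, (Function.support h').Finite ∧
      (∀ p : ℤ × ℤ, h' p ≠ 0 → 1 ≤ p.1 ∧ p.1 ≤ N - d.1) ∧
      (∀ p : ℤ × ℤ, h p = h' (p.1 - d.1, p.2 - d.2) - h' p) := by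
  have hd0 : d.1 ≠ 0 := by omega
  set h' : ℤ × ℤ → ℝ :=
    fun p => ∑ᶠ k : ℤ, if 1 ≤ k then h (p.1 + k * d.1, p.2 + k * d.2) else 0 with hh'
  have sfin : ∀ p : ℤ × ℤ, (Function.support fun k : ℤ =>
      if 1 ≤ k then h (p.1 + k * d.1, p.2 + k * d.2) else 0).Finite := by
    intro p
    refine (supp_fin d hd0 hfin p).subset ?_
    intro k hk
    simp only [Function.mem_support] at hk ⊢
    intro h0
    apply hk
    split_ifs
    · exact h0
    · rfl
  -- vanishing on the left
  have hleft : ∀ p : ℤ × ℤ, p.1 ≤ 0 → h' p = 0 := by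
    intro p hp
    have : h' p = lsum d h p := by
      rw [hh', lsum]
      refine finsum_congr fun k => ?_
      split_ifs with hk
      · rfl
      · have hk0 : k ≤ 0 := by omega
        by_contra hne
        have := (hs _ (Ne.symm hne)).1
        have : k * d.1 ≤ 0 := mul_nonpos_of_nonpos_of_nonneg hk0 (by omega)
        omega
    rw [this, hg p]
  -- vanishing on the right
  have hright : ∀ p : ℤ × ℤ, N - d.1 < p.1 → h' p = 0 := by
    intro p hp
    rw [hh']
    refine finsum_eq_zero_of_forall_eq_zero fun k => ?_
    split_ifs with hk
    · by_contra hne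
      have h2 := (hs _ hne).2
      have : d.1 ≤ k * d.1 := le_mul_of_one_le_left (by omega) hk
      simp only at h2
      omega
    · rfl
  have hstrip : ∀ p : ℤ × ℤ, h' p ≠ 0 → 1 ≤ p.1 ∧ p.1 ≤ N - d.1 := by
    intro p hp
    constructor
    · by_contra hc
      exact hp (hleft p (by omega))
    · by_contra hc
      exact hp (hright p (by omega))
  -- finiteness of the support of h'
  have hfin' : (Function.support h').Finite := by
    have : Function.support h' ⊆
        (fun x : (ℤ × ℤ) × ℤ => ((x.1.1 - x.2 * d.1, x.1.2 - x.2 * d.2) : ℤ × ℤ)) ''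
          ((Function.support h) ×ˢ (Set.Icc (1:ℤ) N)) := by
      intro p hp
      simp only [Function.mem_support] at hp
      have hex : ∃ k : ℤ, (if 1 ≤ k then h (p.1 + k * d.1, p.2 + k * d.2) else 0) ≠ 0 := by
        by_contra hall
        push_neg at hall
        exact hp (by rw [hh']; exact finsum_eq_zero_of_forall_eq_zero hall)
      obtain ⟨k, hk⟩ := hex
      have hk1 : 1 ≤ k := by by_contra hc; simp [hc] at hk
      rw [if_pos hk1] at hk
      have hp1 : 1 ≤ p.1 := (hstrip p hp).1
      have hsk := hs _ hk
      simp only at hsk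
      have hkd : 1 * k ≤ k * d.1 := by
        rw [one_mul]
        exact le_mul_of_one_le_right (by omega) hd
      refine ⟨((p.1 + k * d.1, p.2 + k * d.2), k), ⟨hk, ?_⟩, by simp⟩
      simp only [Set.mem_Icc]
      omega
    exact ((hfin.prod (Set.finite_Icc 1 N)).image _).subset this
  refine ⟨h', hfin', hstrip, ?_⟩
  -- telescoping identity
  intro p
  set F : ℤ → ℝ := fun k => h (p.1 + k * d.1, p.2 + k * d.2) with hF
  have e1 : h' (p.1 - d.1, p.2 - d.2) = ∑ᶠ k : ℤ, (if 0 ≤ k then F k else 0) := by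
    rw [hh']
    have e2 : ∀ k : ℤ, (if 1 ≤ k then h (p.1 - d.1 + k * d.1, p.2 - d.2 + k * d.2) else 0)
        = (fun j : ℤ => if 0 ≤ j then F j else 0) (k - 1) := by
      intro k
      simp only
      have harg : ((p.1 - d.1 + k * d.1, p.2 - d.2 + k * d.2) : ℤ × ℤ)
          = (p.1 + (k - 1) * d.1, p.2 + (k - 1) * d.2) := by
        simp only [Prod.mk.injEq]; constructor <;> ring
      rw [harg, if_congr (by omega : (1 ≤ k) ↔ (0 ≤ k - 1)) rfl rfl]
    calc (∑ᶠ k : ℤ, if 1 ≤ k then h (p.1 - d.1 + k * d.1, p.2 - d.2 + k * d.2) else 0)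
        = ∑ᶠ k : ℤ, (fun j : ℤ => if 0 ≤ j then F j else 0) ((Equiv.subRight (1:ℤ)) k) :=
          finsum_congr e2
      _ = ∑ᶠ j : ℤ, (if 0 ≤ j then F j else 0) :=
          finsum_comp_equiv (Equiv.subRight (1:ℤ)) (f := fun j : ℤ => if 0 ≤ j then F j else 0)
  have sfin0 : (Function.support fun k : ℤ => if 0 ≤ k then F k else 0).Finite := by
    refine (supp_fin d hd0 hfin p).subset ?_
    intro k hk
    simp only [Function.mem_support] at hk ⊢
    intro h0; apply hk; split_ifs; exacts [h0, rfl]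
  have e3 : h' (p.1 - d.1, p.2 - d.2) - h' p
      = ∑ᶠ k : ℤ, ((if 0 ≤ k then F k else 0) - (if 1 ≤ k then F k else 0)) := by
    rw [e1, hh', finsum_sub_distrib sfin0 (sfin p)]
  rw [e3]
  have e4 : ∀ k : ℤ, ((if 0 ≤ k then F k else 0) - (if 1 ≤ k then F k else 0))
      = if k = 0 then F 0 else 0 := by
    intro k
    rcases eq_or_ne k 0 with rfl | hk
    · norm_num
    · rw [if_neg hk]
      by_cases h1 : 1 ≤ k
      · rw [if_pos h1, if_pos (by omega : (0:ℤ) ≤ k), sub_self]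
      · rw [if_neg h1, if_neg (by omega : ¬ (0:ℤ) ≤ k), sub_self]
  rw [finsum_congr e4, finsum_eq_single _ 0 (fun x hx => if_neg hx), if_pos rfl]
  simp [hF]

lemma transfer (d e : ℤ × ℤ) (he : 1 ≤ e.1) (hx : xc d e ≠ 0)
    {h h' : ℤ × ℤ → ℝ} (hfin' : (Function.support h').Finite)
    (hrel : ∀ p : ℤ × ℤ, h p = h' (p.1 - d.1, p.2 - d.2) - h' p)
    (hg : Ghost e h) : Ghost e h' := by
  have he0 : e.1 ≠ 0 := by omega
  -- Step A : shift invariance of the line sums of h'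
  have stepA : ∀ p : ℤ × ℤ, lsum e h' (p.1 - d.1, p.2 - d.2) = lsum e h' p := by
    intro p
    have h0 : lsum e h p = 0 := hg p
    have hsplit : lsum e h p = lsum e h' (p.1 - d.1, p.2 - d.2) - lsum e h' p := by
      rw [lsum, lsum, lsum]
      have e1 : ∀ k : ℤ, h (p.1 + k * e.1, p.2 + k * e.2)
          = h' ((p.1 - d.1) + k * e.1, (p.2 - d.2) + k * e.2)
            - h' (p.1 + k * e.1, p.2 + k * e.2) := by
        intro k
        rw [hrel (p.1 + k * e.1, p.2 + k * e.2)]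
        have harg : ((p.1 + k * e.1 - d.1, p.2 + k * e.2 - d.2) : ℤ × ℤ)
            = ((p.1 - d.1) + k * e.1, (p.2 - d.2) + k * e.2) := by
          simp only [Prod.mk.injEq]; constructor <;> ring
        rw [show (((p.1 + k * e.1, p.2 + k * e.2) : ℤ × ℤ).1 - d.1,
            ((p.1 + k * e.1, p.2 + k * e.2) : ℤ × ℤ).2 - d.2)
            = ((p.1 - d.1) + k * e.1, (p.2 - d.2) + k * e.2) from harg]
      rw [finsum_congr e1,
        finsum_sub_distrib (supp_fin e he0 hfin' (p.1 - d.1, p.2 - d.2))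
          (supp_fin e he0 hfin' p)]
    rw [hsplit] at h0
    linarith
  -- Step B : iterate
  have stepB : ∀ m : ℕ, ∀ p : ℤ × ℤ,
      lsum e h' (p.1 - m * d.1, p.2 - m * d.2) = lsum e h' p := by
    intro m
    induction m with
    | zero => intro p; simp
    | succ m ih =>
      intro p
      have h1 : lsum e h' (p.1 - (m+1 : ℕ) * d.1, p.2 - (m+1 : ℕ) * d.2)
          = lsum e h' ((p.1 - m * d.1) - d.1, (p.2 - m * d.2) - d.2) := by
        congr 1
        simp only [Prod.mk.injEq]
        constructor <;> push_cast <;> ring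
      rw [h1, stepA (p.1 - m * d.1, p.2 - m * d.2), ih p]
  -- the linear functional constant on e-lines
  set φ : ℤ × ℤ → ℤ := fun x => e.2 * x.1 - e.1 * x.2 with hφ
  set B : ℤ := ∑ x ∈ hfin'.toFinset, |φ x| with hB
  have hBnn : 0 ≤ B := Finset.sum_nonneg fun x _ => abs_nonneg _
  have hbound : ∀ x : ℤ × ℤ, h' x ≠ 0 → |φ x| ≤ B := by
    intro x hx'
    exact Finset.single_le_sum (fun y _ => abs_nonneg (φ y))
      (hfin'.mem_toFinset.2 hx')
  intro p
  set m : ℕ := (B + |φ p| + 1).toNat with hm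
  have hm1 : (B + |φ p| + 1 : ℤ) = (m : ℤ) := by
    rw [hm, Int.toNat_of_nonneg (by positivity)]
  have hφd : φ d = xc d e := by rw [hφ, xc]; ring
  have hφd1 : 1 ≤ |φ d| := by
    rw [hφd]
    exact Int.one_le_abs hx
  set q : ℤ × ℤ := (p.1 - m * d.1, p.2 - m * d.2) with hq
  have hφq : φ q = φ p - m * φ d := by rw [hq, hφ]; simp; ring
  have hqbig : B < |φ q| := by
    have h1 : |(m : ℤ) * φ d| - |φ p| ≤ |(m : ℤ) * φ d - φ p| :=
      abs_sub_abs_le_abs_sub _ _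
    have h2 : |(m : ℤ) * φ d - φ p| = |φ q| := by
      rw [hφq, ← abs_neg]; congr 1; ring
    have h3 : (m : ℤ) ≤ |(m : ℤ) * φ d| := by
      rw [abs_mul, Nat.abs_cast]
      calc (m : ℤ) = m * 1 := by ring
        _ ≤ (m : ℤ) * |φ d| := by
            apply mul_le_mul_of_nonneg_left hφd1 (by positivity)
    omega
  have hGq : lsum e h' q = 0 := by
    rw [lsum]
    refine finsum_eq_zero_of_forall_eq_zero fun k => ?_
    by_contra hne
    have h1 : |φ (q.1 + k * e.1, q.2 + k * e.2)| ≤ B := hbound _ hne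
    have h2 : φ (q.1 + k * e.1, q.2 + k * e.2) = φ q := by rw [hφ]; simp; ring
    rw [h2] at h1
    omega
  show lsum e h' p = 0
  rw [← stepB m p]
  exact hGq

lemma main_ind (D : Finset (ℤ × ℤ)) :
    (∀ d ∈ D, 1 ≤ d.1) → (∀ d ∈ D, ∀ e ∈ D, d ≠ e → xc d e ≠ 0) →
    ∀ N : ℤ, ∀ h : ℤ × ℤ → ℝ, (Function.support h).Finite →
      (∀ p : ℤ × ℤ, h p ≠ 0 → 1 ≤ p.1 ∧ p.1 ≤ N) →
      (∀ d ∈ D, Ghost d h) → N ≤ ∑ d ∈ D, d.1 → ∀ p, h p = 0 := by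
  induction D using Finset.induction_on with
  | empty =>
    intro _ _ N h hfin hs hg hN p
    by_contra hp
    have := hs p hp
    simp only [Finset.sum_empty] at hN
    omega
  | insert a D ha ih =>
    intro h1 hpair N h hfin hs hg hN
    have haD : a ∈ insert a D := Finset.mem_insert_self a D
    obtain ⟨h', hfin', hstrip', hrel⟩ :=
      peel a (h1 a haD) hfin N hs (hg a haD)
    have hg' : ∀ e ∈ D, Ghost e h' := by
      intro e heD
      have heI : e ∈ insert a D := Finset.mem_insert_of_mem heD
      refine transfer a e (h1 e heI) ?_ hfin' hrel (hg e heI)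
      exact hpair a haD e heI (fun hae => ha (hae ▸ heD))
    have hsum : N - a.1 ≤ ∑ d ∈ D, d.1 := by
      rw [Finset.sum_insert ha] at hN
      omega
    have hz : ∀ p, h' p = 0 :=
      ih (fun d hd => h1 d (Finset.mem_insert_of_mem hd))
        (fun d hd e he => hpair d (Finset.mem_insert_of_mem hd) e (Finset.mem_insert_of_mem he))
        (N - a.1) h' hfin' hstrip' hg' hsum
    intro p
    rw [hrel p, hz, hz, sub_self]


lemma ghost_of_clue (n : ℕ) (f g : ℤ × ℤ → ℝ) (r : ℚ)
    (hc : ∀ c : ℝ, clueSum n n (some r) c f = clueSum n n (some r) c g)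
    (h : ℤ × ℤ → ℝ)
    (hh : ∀ p : ℤ × ℤ, h p = if 1 ≤ p.1 ∧ p.1 ≤ (n:ℤ) ∧ 1 ≤ p.2 ∧ p.2 ≤ (n:ℤ)
        then f p - g p else 0) :
    Ghost ((r.den : ℤ), r.num) h := by
  intro p
  set den : ℤ := (r.den : ℤ) with hden
  set num : ℤ := r.num with hnum
  have hden0 : 0 < den := by rw [hden]; exact_mod_cast r.pos
  have key1 : (r : ℝ) * (den : ℝ) = (num : ℝ) := by
    rw [hden, hnum, Rat.cast_def]
    push_cast
    field_simp
  have online : ∀ k : ℤ, ((p.2 + k * num : ℤ) : ℝ)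
      = (r : ℝ) * ((p.1 + k * den : ℤ) : ℝ) + ((p.2 : ℝ) - (r : ℝ) * (p.1 : ℝ)) := by
    intro k
    push_cast
    push_cast at key1
    linear_combination (-(k : ℝ)) * key1
  set S : Finset (ℤ × ℤ) := (Finset.Icc (1 : ℤ) n ×ˢ Finset.Icc (1 : ℤ) n).filter
      (fun x => (x.2 : ℝ) = (r : ℝ) * (x.1 : ℝ) + ((p.2 : ℝ) - (r : ℝ) * (p.1 : ℝ))) with hS
  have back : ∀ x : ℤ × ℤ,
      ((x.2 : ℝ) = (r : ℝ) * (x.1 : ℝ) + ((p.2 : ℝ) - (r : ℝ) * (p.1 : ℝ))) →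
      x = (p.1 + ((x.1 - p.1) / den) * den, p.2 + ((x.1 - p.1) / den) * num) := by
    intro x hx
    have hreal : ((den * (x.2 - p.2) : ℤ) : ℝ) = ((num * (x.1 - p.1) : ℤ) : ℝ) := by
      push_cast
      push_cast at key1 hx
      linear_combination (den : ℝ) * hx + ((x.1 : ℝ) - (p.1 : ℝ)) * key1
    have hint : den * (x.2 - p.2) = num * (x.1 - p.1) := by exact_mod_cast hreal
    have hgcd : Int.gcd den num = 1 := by
      rw [hden, hnum]
      have := r.reduced
      simp only [Int.gcd, Int.natAbs_natCast]
      exact Nat.Coprime.symm this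
    have hdvd2 : den ∣ num * (x.1 - p.1) := ⟨x.2 - p.2, hint.symm⟩
    have hdvd : den ∣ x.1 - p.1 := Int.dvd_of_dvd_mul_right_of_gcd_one hdvd2 hgcd
    have hk1 : ((x.1 - p.1) / den) * den = x.1 - p.1 := Int.ediv_mul_cancel hdvd
    have hx2 : x.2 - p.2 = ((x.1 - p.1) / den) * num := by
      have h2 : den * (x.2 - p.2) = den * (((x.1 - p.1) / den) * num) := by
        rw [hint]
        calc num * (x.1 - p.1) = num * ((x.1 - p.1) / den * den) := by rw [hk1]
          _ = den * ((x.1 - p.1) / den * num) := by ring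
      exact mul_left_cancel₀ (by omega) h2
    have hx1 : x.1 = p.1 + ((x.1 - p.1) / den) * den := by omega
    rw [Prod.ext_iff]
    constructor
    · simpa using hx1
    · simp only
      omega
  -- membership of the parametrized points
  have A : ∀ k : ℤ, h (p.1 + k * den, p.2 + k * num) ≠ 0 →
      ((p.1 + k * den, p.2 + k * num) : ℤ × ℤ) ∈ S := by
    intro k hk
    have hgrid : 1 ≤ p.1 + k * den ∧ p.1 + k * den ≤ (n:ℤ)
        ∧ 1 ≤ p.2 + k * num ∧ p.2 + k * num ≤ (n:ℤ) := by
      by_contra hcon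
      rw [hh, if_neg hcon] at hk
      exact hk rfl
    rw [hS, Finset.mem_filter, Finset.mem_product, Finset.mem_Icc, Finset.mem_Icc]
    refine ⟨⟨⟨hgrid.1, hgrid.2.1⟩, ⟨hgrid.2.2.1, hgrid.2.2.2⟩⟩, ?_⟩
    exact_mod_cast online k
  set K : Finset ℤ := S.image (fun x : ℤ × ℤ => (x.1 - p.1) / den) with hK
  have hinv : ∀ k : ℤ, ((p.1 + k * den) - p.1) / den = k := by
    intro k
    have : (p.1 + k * den) - p.1 = k * den := by ring
    rw [this, Int.mul_ediv_cancel k (by omega)]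
  have step1 : lsum ((r.den : ℤ), r.num) h p = ∑ k ∈ K, h (p.1 + k * den, p.2 + k * num) := by
    rw [lsum]
    refine finsum_eq_sum_of_support_subset _ ?_
    intro k hk
    simp only [Function.mem_support] at hk
    have hmm : ((p.1 + k * den, p.2 + k * num) : ℤ × ℤ) ∈ S := A k hk
    simp only [hK, Finset.coe_image, Set.mem_image, Finset.mem_coe]
    exact ⟨_, hmm, by simpa using hinv k⟩
  have step2 : ∑ k ∈ K, h (p.1 + k * den, p.2 + k * num) = ∑ x ∈ S, h x := by
    refine Finset.sum_nbij' (i := fun k : ℤ => ((p.1 + k * den, p.2 + k * num) : ℤ × ℤ))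
      (j := fun x : ℤ × ℤ => (x.1 - p.1) / den) ?_ ?_ ?_ ?_ ?_
    · intro k hk
      rw [hK, Finset.mem_image] at hk
      obtain ⟨x, hxS, hxk⟩ := hk
      have hxline : (x.2 : ℝ) = (r : ℝ) * (x.1 : ℝ) + ((p.2 : ℝ) - (r : ℝ) * (p.1 : ℝ)) := by
        rw [hS] at hxS
        exact (Finset.mem_filter.1 hxS).2
      have hxx : x = ((p.1 + k * den, p.2 + k * num) : ℤ × ℤ) := by
        rw [← hxk]; exact back x hxline
      show ((p.1 + k * den, p.2 + k * num) : ℤ × ℤ) ∈ S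
      rw [← hxx]
      exact hxS
    · intro x hx
      rw [hK, Finset.mem_image]
      exact ⟨x, hx, rfl⟩
    · intro k _
      exact hinv k
    · intro x hx
      have hxline : (x.2 : ℝ) = (r : ℝ) * (x.1 : ℝ) + ((p.2 : ℝ) - (r : ℝ) * (p.1 : ℝ)) := by
        rw [hS] at hx
        exact (Finset.mem_filter.1 hx).2
      show ((p.1 + ((x.1 - p.1) / den) * den, p.2 + ((x.1 - p.1) / den) * num) : ℤ × ℤ) = x
      exact (back x hxline).symm
    · intro k _
      rfl
  have step3 : ∑ x ∈ S, h x = ∑ x ∈ S, (f x - g x) := by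
    refine Finset.sum_congr rfl fun x hx => ?_
    rw [hS, Finset.mem_filter, Finset.mem_product, Finset.mem_Icc, Finset.mem_Icc] at hx
    rw [hh, if_pos ⟨hx.1.1.1, hx.1.1.2, hx.1.2.1, hx.1.2.2⟩]
  have step4 : ∑ x ∈ S, (f x - g x) = 0 := by
    rw [Finset.sum_sub_distrib]
    have hcc := hc ((p.2 : ℝ) - (r : ℝ) * (p.1 : ℝ))
    rw [clueSum, clueSum] at hcc
    rw [hS]
    rw [sub_eq_zero]
    convert hcc using 2
  rw [step1, step2, step3, step4]


/-- The finite set of primitive directions used for `C_{1/q}`. -/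
noncomputable def Dset (q : ℕ) : Finset (ℤ × ℤ) :=
  (((Finset.Icc (1 - (q:ℤ)) ((q:ℤ) - 1)).image fun k => ((1:ℤ), k)) ∪
    ((Finset.Icc 2 q).image fun k : ℕ => ((k:ℤ), (1:ℤ)))) ∪
  ((Finset.Icc 2 q).image fun k : ℕ => ((k:ℤ), (-1:ℤ))) ∪
  {((1:ℤ), -(q:ℤ))}

lemma mem_Dset {q : ℕ} {x : ℤ × ℤ} : x ∈ Dset q ↔
    (∃ k : ℤ, (1 - (q:ℤ) ≤ k ∧ k ≤ (q:ℤ) - 1) ∧ x = (1, k)) ∨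
    (∃ k : ℕ, (2 ≤ k ∧ k ≤ q) ∧ x = ((k:ℤ), 1)) ∨
    (∃ k : ℕ, (2 ≤ k ∧ k ≤ q) ∧ x = ((k:ℤ), -1)) ∨
    x = (1, -(q:ℤ)) := by
  constructor
  · intro hx
    rcases Finset.mem_union.1 hx with hx | hx
    · rcases Finset.mem_union.1 hx with hx | hx
      · rcases Finset.mem_union.1 hx with hx | hx
        · obtain ⟨k, hk, rfl⟩ := Finset.mem_image.1 hx
          exact Or.inl ⟨k, Finset.mem_Icc.1 hk, rfl⟩
        · obtain ⟨k, hk, rfl⟩ := Finset.mem_image.1 hx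
          exact Or.inr (Or.inl ⟨k, Finset.mem_Icc.1 hk, rfl⟩)
      · obtain ⟨k, hk, rfl⟩ := Finset.mem_image.1 hx
        exact Or.inr (Or.inr (Or.inl ⟨k, Finset.mem_Icc.1 hk, rfl⟩))
    · exact Or.inr (Or.inr (Or.inr (Finset.mem_singleton.1 hx)))
  · rintro (⟨k, hk, rfl⟩ | ⟨k, hk, rfl⟩ | ⟨k, hk, rfl⟩ | rfl)
    · exact Finset.mem_union.2 (Or.inl (Finset.mem_union.2 (Or.inl (Finset.mem_union.2
        (Or.inl (Finset.mem_image.2 ⟨k, Finset.mem_Icc.2 hk, rfl⟩))))))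
    · exact Finset.mem_union.2 (Or.inl (Finset.mem_union.2 (Or.inl (Finset.mem_union.2
        (Or.inr (Finset.mem_image.2 ⟨k, Finset.mem_Icc.2 hk, rfl⟩))))))
    · exact Finset.mem_union.2 (Or.inl (Finset.mem_union.2 (Or.inr
        (Finset.mem_image.2 ⟨k, Finset.mem_Icc.2 hk, rfl⟩))))
    · exact Finset.mem_union.2 (Or.inr (Finset.mem_singleton.2 rfl))

lemma firsts_Dset (q : ℕ) : ∀ d ∈ Dset q, 1 ≤ d.1 := by
  intro d hd
  rcases mem_Dset.1 hd with ⟨k, hk, rfl⟩ | ⟨k, hk, rfl⟩ | ⟨k, hk, rfl⟩ | rfl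
  · exact le_refl 1
  · show (1:ℤ) ≤ (k:ℤ); exact_mod_cast (by omega : 1 ≤ k)
  · show (1:ℤ) ≤ (k:ℤ); exact_mod_cast (by omega : 1 ≤ k)
  · exact le_refl 1

lemma absprod (a b : ℤ) (hb : 2 ≤ b) : a * b ≠ 1 ∧ a * b ≠ -1 := by
  rcases lt_trichotomy a 0 with hc | rfl | hc
  · have h1 : a ≤ -1 := by omega
    have h2 : a * b ≤ -2 := by nlinarith
    constructor <;> intro hcon <;> linarith
  · simp
  · have h1 : 1 ≤ a := by omega
    have h2 : 2 ≤ a * b := by nlinarith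
    constructor <;> intro hcon <;> linarith

lemma pairwise_Dset (q : ℕ) (hq : 2 ≤ q) :
    ∀ d ∈ Dset q, ∀ e ∈ Dset q, d ≠ e → xc d e ≠ 0 := by
  have hq2 : (2:ℤ) ≤ (q:ℤ) := by exact_mod_cast hq
  intro d hd e he hne
  rcases mem_Dset.1 hd with ⟨k, hk, rfl⟩ | ⟨k, hk, rfl⟩ | ⟨k, hk, rfl⟩ | rfl <;>
    rcases mem_Dset.1 he with ⟨k', hk', rfl⟩ | ⟨k', hk', rfl⟩ | ⟨k', hk', rfl⟩ | rfl <;>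
    simp only [xc] <;> intro hcon
  -- d = (1,k)
  · apply hne
    have : k = k' := by omega
    rw [this]
  · have h2 : (2:ℤ) ≤ (k':ℤ) := by exact_mod_cast hk'.1
    exact (absprod k k' h2).1 (by linear_combination -hcon)
  · have h2 : (2:ℤ) ≤ (k':ℤ) := by exact_mod_cast hk'.1
    exact (absprod k k' h2).2 (by linear_combination -hcon)
  · omega
  -- d = (k,1)
  · have h2 : (2:ℤ) ≤ (k:ℤ) := by exact_mod_cast hk.1
    exact (absprod k' k h2).1 (by linear_combination hcon)
  · have h2 : (2:ℤ) ≤ (k:ℤ) := by exact_mod_cast hk.1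
    have h2' : (2:ℤ) ≤ (k':ℤ) := by exact_mod_cast hk'.1
    apply hne
    have hkk : k = k' := by exact_mod_cast (by omega : (k:ℤ) = (k':ℤ))
    rw [hkk]
  · have h2 : (2:ℤ) ≤ (k:ℤ) := by exact_mod_cast hk.1
    have h2' : (2:ℤ) ≤ (k':ℤ) := by exact_mod_cast hk'.1
    omega
  · have h2 : (2:ℤ) ≤ (k:ℤ) := by exact_mod_cast hk.1
    have h4 : (2:ℤ)*(2:ℤ) ≤ (k:ℤ)*(q:ℤ) :=
      mul_le_mul h2 hq2 (by norm_num) (by positivity)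
    have h5 : (k:ℤ)*(q:ℤ) = -1 := by linear_combination -hcon
    linarith
  -- d = (k,-1)
  · have h2 : (2:ℤ) ≤ (k:ℤ) := by exact_mod_cast hk.1
    exact (absprod k' k h2).2 (by linear_combination hcon)
  · have h2 : (2:ℤ) ≤ (k:ℤ) := by exact_mod_cast hk.1
    have h2' : (2:ℤ) ≤ (k':ℤ) := by exact_mod_cast hk'.1
    omega
  · have h2 : (2:ℤ) ≤ (k:ℤ) := by exact_mod_cast hk.1
    have h2' : (2:ℤ) ≤ (k':ℤ) := by exact_mod_cast hk'.1
    apply hne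
    have hkk : k = k' := by exact_mod_cast (by omega : (k:ℤ) = (k':ℤ))
    rw [hkk]
  · have h2 : (2:ℤ) ≤ (k:ℤ) := by exact_mod_cast hk.1
    have h4 : (2:ℤ)*(2:ℤ) ≤ (k:ℤ)*(q:ℤ) :=
      mul_le_mul h2 hq2 (by norm_num) (by positivity)
    have h5 : (k:ℤ)*(q:ℤ) = 1 := by linear_combination -hcon
    linarith
  -- d = (1,-q)
  · omega
  · have h2' : (2:ℤ) ≤ (k':ℤ) := by exact_mod_cast hk'.1
    have h4 : (2:ℤ)*(2:ℤ) ≤ (q:ℤ)*(k':ℤ) :=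
      mul_le_mul hq2 h2' (by norm_num) (by positivity)
    have h5 : (q:ℤ)*(k':ℤ) = -1 := by linear_combination hcon
    linarith
  · have h2' : (2:ℤ) ≤ (k':ℤ) := by exact_mod_cast hk'.1
    have h4 : (2:ℤ)*(2:ℤ) ≤ (q:ℤ)*(k':ℤ) :=
      mul_le_mul hq2 h2' (by norm_num) (by positivity)
    have h5 : (q:ℤ)*(k':ℤ) = 1 := by linear_combination hcon
    linarith
  · exact hne rfl

lemma gauss (q : ℕ) (hq : 1 ≤ q) :
    (∑ k ∈ Finset.Icc 2 q, (k:ℤ)) * 2 = (q:ℤ)^2 + (q:ℤ) - 2 := by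
  induction q with
  | zero => omega
  | succ m ih =>
    rcases Nat.lt_or_ge m 1 with hm | hm
    · interval_cases m
      simp
    · have hstep := Finset.sum_Icc_succ_top (by omega : 2 ≤ m + 1) (fun k : ℕ => (k:ℤ))
      rw [hstep]
      have hih := ih hm
      push_cast
      push_cast at hih
      nlinarith [hih]

lemma sum_Dset (q : ℕ) (hq : 2 ≤ q) :
    ∑ d ∈ Dset q, d.1 = (q:ℤ)^2 + 3*(q:ℤ) - 2 := by
  have hq2 : (2:ℤ) ≤ (q:ℤ) := by exact_mod_cast hq
  set A := (Finset.Icc (1 - (q:ℤ)) ((q:ℤ) - 1)).image fun k => ((1:ℤ), k) with hA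
  set B := (Finset.Icc 2 q).image (fun k : ℕ => ((k:ℤ), (1:ℤ))) with hB
  set C := (Finset.Icc 2 q).image (fun k : ℕ => ((k:ℤ), (-1:ℤ))) with hC
  set E : Finset (ℤ × ℤ) := {((1:ℤ), -(q:ℤ))} with hE
  have memA : ∀ x ∈ A, x.1 = 1 := by
    intro x hx; rw [hA] at hx; obtain ⟨k, _, rfl⟩ := Finset.mem_image.1 hx; rfl
  have memB : ∀ x ∈ B, 2 ≤ x.1 ∧ x.2 = 1 := by
    intro x hx; rw [hB] at hx; obtain ⟨k, hk, rfl⟩ := Finset.mem_image.1 hx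
    rw [Finset.mem_Icc] at hk
    exact ⟨by show (2:ℤ) ≤ (k:ℤ); exact_mod_cast hk.1, rfl⟩
  have memC : ∀ x ∈ C, 2 ≤ x.1 ∧ x.2 = -1 := by
    intro x hx; rw [hC] at hx; obtain ⟨k, hk, rfl⟩ := Finset.mem_image.1 hx
    rw [Finset.mem_Icc] at hk
    exact ⟨by show (2:ℤ) ≤ (k:ℤ); exact_mod_cast hk.1, rfl⟩
  have dAB : Disjoint A B := by
    rw [Finset.disjoint_left]
    intro x hx hx'
    have h1 := memA x hx; have h2 := memB x hx'
    omega
  have dABC : Disjoint (A ∪ B) C := by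
    rw [Finset.disjoint_left]
    intro x hx hx'
    have hC2 := memC x hx'
    rcases Finset.mem_union.1 hx with h | h
    · have := memA x h; omega
    · have := memB x h; omega
  have dABCE : Disjoint (A ∪ B ∪ C) E := by
    rw [Finset.disjoint_left]
    intro x hx hx'
    rw [hE, Finset.mem_singleton] at hx'
    subst hx'
    rcases Finset.mem_union.1 hx with h | h
    · rcases Finset.mem_union.1 h with h2 | h2
      · rw [hA] at h2
        obtain ⟨k, hk, hk2⟩ := Finset.mem_image.1 h2
        rw [Finset.mem_Icc] at hk
        have hsnd : k = -(q:ℤ) := by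
          have := congrArg Prod.snd hk2; simpa using this
        omega
      · have := memB (1, -(q:ℤ)) h2; omega
    · have := memC (1, -(q:ℤ)) h; omega
  have sumA : ∑ x ∈ A, x.1 = 2*(q:ℤ) - 1 := by
    rw [hA, Finset.sum_image (by intro a _ b _ hab; simpa using hab)]
    simp only [Finset.sum_const, nsmul_eq_mul, mul_one]
    rw [Int.card_Icc]
    rw [Int.toNat_of_nonneg (by omega)]
    omega
  have sumB : ∑ x ∈ B, x.1 = ∑ k ∈ Finset.Icc 2 q, (k:ℤ) := by
    rw [hB, Finset.sum_image]
    intro a _ b _ hab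
    simp only [Prod.mk.injEq] at hab
    exact_mod_cast hab.1
  have sumC : ∑ x ∈ C, x.1 = ∑ k ∈ Finset.Icc 2 q, (k:ℤ) := by
    rw [hC, Finset.sum_image]
    intro a _ b _ hab
    simp only [Prod.mk.injEq] at hab
    exact_mod_cast hab.1
  have sumE : ∑ x ∈ E, x.1 = 1 := by rw [hE]; simp
  have hg := gauss q (by omega)
  show ∑ d ∈ (A ∪ B ∪ C ∪ E), d.1 = (q:ℤ)^2 + 3*(q:ℤ) - 2
  rw [Finset.sum_union dABCE, Finset.sum_union dABC, Finset.sum_union dAB,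
    sumA, sumB, sumC, sumE]
  linarith

lemma slope_of_mem (q : ℕ) (hq : 2 ≤ q) {d : ℤ × ℤ} (hd : d ∈ Dset q) :
    ∃ r : ℚ, some r ∈ CposInvQ q ∧ (((r.den : ℤ), r.num) : ℤ × ℤ) = d := by
  have hq2 : (2:ℤ) ≤ (q:ℤ) := by exact_mod_cast hq
  rcases mem_Dset.1 hd with ⟨k, hk, rfl⟩ | ⟨k, hk, rfl⟩ | ⟨k, hk, rfl⟩ | rfl
  · -- d = (1, k) : slope k
    refine ⟨(k : ℚ), ?_, by simp⟩
    rcases eq_or_ne k 0 with rfl | hk0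
    · left; left; left
      simp
    · left; right
      exact ⟨k, Int.one_le_abs hk0, abs_le.2 ⟨by omega, by omega⟩, Or.inl rfl⟩
  · -- d = (k, 1) : slope 1/k
    have hk2 : (2:ℤ) ≤ (k:ℤ) := by exact_mod_cast hk.1
    have hkq : ((k:ℤ):ℚ) ≠ 0 := by
      exact_mod_cast (by omega : (k:ℤ) ≠ 0)
    set r : ℚ := ⟨1, k, by omega, Nat.coprime_one_left k⟩ with hr
    have hrval : r = 1 / ((k:ℤ) : ℚ) := by
      rw [hr, Rat.mk_eq_divInt, Rat.divInt_eq_div]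
      norm_num
    refine ⟨r, ?_, by simp [hr]⟩
    rcases eq_or_ne k q with hkq2 | hkq2
    · right
      simp only [Set.mem_insert_iff, Set.mem_singleton_iff]
      right; right
      rw [hrval, hkq2]
      congr 1
    · left; right
      refine ⟨(k:ℤ), ?_, ?_, Or.inr ?_⟩
      · rw [abs_of_nonneg (by positivity)]
        omega
      · rw [abs_of_nonneg (by positivity)]
        exact_mod_cast (by omega : (k:ℤ) ≤ (q:ℤ) - 1)
      · rw [hrval]
  · -- d = (k, -1) : slope -1/k = 1/(-k)
    have hk2 : (2:ℤ) ≤ (k:ℤ) := by exact_mod_cast hk.1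
    have hkq : ((k:ℤ):ℚ) ≠ 0 := by
      exact_mod_cast (by omega : (k:ℤ) ≠ 0)
    have hcop : (-1 : ℤ).natAbs.Coprime k := by
      have : (-1 : ℤ).natAbs = 1 := rfl
      rw [this]
      exact Nat.coprime_one_left k
    set r : ℚ := ⟨-1, k, by omega, hcop⟩ with hr
    have hrval : r = -1 / ((k:ℤ) : ℚ) := by
      rw [hr, Rat.mk_eq_divInt, Rat.divInt_eq_div]
      norm_num
    refine ⟨r, ?_, by simp [hr]⟩
    rcases eq_or_ne k q with hkq2 | hkq2
    · right
      simp only [Set.mem_insert_iff, Set.mem_singleton_iff]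
      left
      rw [hrval, hkq2]
      congr 1
      push_cast
      ring
    · left; right
      refine ⟨-(k:ℤ), ?_, ?_, Or.inr ?_⟩
      · rw [abs_neg, abs_of_nonneg (by positivity)]
        omega
      · rw [abs_neg, abs_of_nonneg (by positivity)]
        exact_mod_cast (by omega : (k:ℤ) ≤ (q:ℤ) - 1)
      · rw [hrval]
        congr 1
        push_cast
        rw [div_neg, neg_div]
  · -- d = (1, -q) : slope -q
    refine ⟨((-(q:ℤ) : ℤ) : ℚ), ?_, by simp⟩
    right
    simp only [Set.mem_insert_iff, Set.mem_singleton_iff]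
    right; left
    congr 1

end RKAux

/-- if `q ≥ 2` and `n ≤ q² + 3q − 2`, then every entry of `I_{n,n}` is
uniquely solvable with respect to `C_{1/q}`; equivalently every solvable `n × n` RK puzzle
with clue slopes `C_{1/q}` has a unique solution. -/
theorem rk_unique_CposInvQ (q : ℕ) (hq : 2 ≤ q) (n : ℕ) (hn : 0 < n)
    (hnq : n ≤ q ^ 2 + 3 * q - 2) :
    ∀ f g : ℤ × ℤ → ℝ, ClueEquiv n n (CposInvQ q) f g →
      ∀ p : ℤ × ℤ, 1 ≤ p.1 → p.1 ≤ (n : ℤ) → 1 ≤ p.2 → p.2 ≤ (n : ℤ) → f p = g p := by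
  intro f g hCE p0 hp1 hp2 hp3 hp4
  set h : ℤ × ℤ → ℝ := fun p =>
    if 1 ≤ p.1 ∧ p.1 ≤ (n:ℤ) ∧ 1 ≤ p.2 ∧ p.2 ≤ (n:ℤ) then f p - g p else 0 with hh
  have hfin : (Function.support h).Finite := by
    apply (Set.finite_Icc ((1:ℤ), (1:ℤ)) ((n:ℤ), (n:ℤ))).subset
    intro x hx
    simp only [Function.mem_support, hh] at hx
    by_contra hc
    apply hx
    rw [if_neg]
    intro hcon
    apply hc
    rw [Set.mem_Icc, Prod.le_def, Prod.le_def]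
    exact ⟨⟨hcon.1, hcon.2.2.1⟩, ⟨hcon.2.1, hcon.2.2.2⟩⟩
  have hstrip : ∀ p : ℤ × ℤ, h p ≠ 0 → 1 ≤ p.1 ∧ p.1 ≤ (n:ℤ) := by
    intro p hp
    rw [hh] at hp
    simp only at hp
    by_contra hc
    apply hp
    rw [if_neg]
    intro hcon
    exact hc ⟨hcon.1, hcon.2.1⟩
  have hg : ∀ d ∈ RKAux.Dset q, RKAux.Ghost d h := by
    intro d hd
    obtain ⟨r, hrT, hrd⟩ := RKAux.slope_of_mem q hq hd
    rw [← hrd]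
    exact RKAux.ghost_of_clue n f g r (fun c => hCE (some r) hrT c) h (fun p => rfl)
  have hsum : (n:ℤ) ≤ ∑ d ∈ RKAux.Dset q, d.1 := by
    rw [RKAux.sum_Dset q hq]
    have h2 : 2 ≤ q^2 + 3*q := by nlinarith
    have hle : (n:ℤ) ≤ ((q^2 + 3*q - 2 : ℕ) : ℤ) := by exact_mod_cast hnq
    rw [Nat.cast_sub h2] at hle
    push_cast at hle
    linarith
  have hz := RKAux.main_ind (RKAux.Dset q) (RKAux.firsts_Dset q) (RKAux.pairwise_Dset q hq)
    (n:ℤ) h hfin hstrip hg hsum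
  have hz0 := hz p0
  rw [hh] at hz0
  simp only at hz0
  rw [if_pos ⟨hp1, hp2, hp3, hp4⟩] at hz0
  linarith
end

section
/- Let q ≥ 2 be an integer and let n be a positive integer with n ≤ q² + 3q − 1. Let T = C_q = {0, ∞} ∪ {k : k ∈ ℤ, 1 ≤ |k| ≤ q} ∪ {1/k : k ∈ ℤ, 1 ≤ |k| ≤ q}. Then any two functions f, g : ℤ² → ℝ that are T-clue-equivalent on I_{n,n} agree at every point of I_{n,n}; equivalently, every solvable n × n RK puzzle with clue slopes T has a unique solution. -/
open Classical

/-- The slope set `C_q = {0, ∞} ∪ {k : 1 ≤ |k| ≤ q} ∪ {1/k : 1 ≤ |k| ≤ q}`. -/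
def CposQ (q : ℕ) : Set Slope :=
  {some 0, none} ∪
    {s | ∃ k : ℤ, 1 ≤ |k| ∧ |k| ≤ (q : ℤ) ∧ (s = some (k : ℚ) ∨ s = some (1 / (k : ℚ)))}

open Finsupp Polynomial LaurentPolynomial

noncomputable section

abbrev AA : Type := AddMonoidAlgebra ℝ (ℤ × ℤ)

def sing (s : ℤ × ℤ) (r : ℝ) : AA := AddMonoidAlgebra.single s r

def XX (d : ℤ × ℤ) : AA := sing d 1

lemma sing_mul_sing (a b : ℤ × ℤ) (r t : ℝ) : sing a r * sing b t = sing (a + b) (r * t) := by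
  simp [sing, AddMonoidAlgebra.single_mul_single]

lemma XX_zero : XX 0 = 1 := by
  simp only [XX, sing]
  rfl

lemma XX_mul (a b : ℤ × ℤ) : XX a * XX b = XX (a + b) := by
  simp [XX, sing_mul_sing]

def pihom (d : ℤ × ℤ) : (ℤ × ℤ) →+ ℤ where
  toFun s := d.2 * s.1 - d.1 * s.2
  map_zero' := by simp
  map_add' a b := by simp [Prod.fst_add, Prod.snd_add]; ring

lemma pihom_apply (d s : ℤ × ℤ) : pihom d s = d.2 * s.1 - d.1 * s.2 := rfl

-- geometric series divisibility
lemma dvd_X_nsmul_sub_one (d : ℤ × ℤ) (m : ℕ) : (XX d - 1) ∣ (XX (m • d) - 1) := by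
  induction m with
  | zero => rw [zero_smul, XX_zero, sub_self]; exact dvd_zero _
  | succ m ih =>
    have : XX ((m + 1) • d) - 1 = XX (m • d) * (XX d - 1) + (XX (m • d) - 1) := by
      rw [succ_nsmul, ← XX_mul]; ring
    rw [this]
    exact dvd_add (Dvd.dvd.mul_left dvd_rfl _) ih

lemma dvd_X_zsmul_sub_one (d : ℤ × ℤ) (j : ℤ) : (XX d - 1) ∣ (XX (j • d) - 1) := by
  cases j with
  | ofNat m => simpa using dvd_X_nsmul_sub_one d m
  | negSucc m =>
    have key : XX ((Int.negSucc m) • d) - 1 =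
        (-(XX ((Int.negSucc m) • d))) * (XX ((m+1) • d) - 1) := by
      rw [mul_sub, mul_one, neg_mul, XX_mul]
      have : Int.negSucc m • d + (m + 1) • d = 0 := by
        rw [← Nat.cast_smul_eq_nsmul ℤ (m+1) d, ← add_smul]
        have : Int.negSucc m + ((m:ℕ)+1 : ℕ) = 0 := by
          simp [Int.negSucc_eq]
        rw [this, zero_smul]
      rw [this, XX_zero]
      ring
    rw [key]
    exact Dvd.dvd.mul_left (dvd_X_nsmul_sub_one d (m+1)) _

lemma div_of_fibersum_zero (d : ℤ × ℤ) (w : ℤ × ℤ) (hw : pihom d w = 1)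
    (hker : ∀ s : ℤ × ℤ, pihom d s = 0 → ∃ j : ℤ, s = j • d)
    (h : AA) (hz : Finsupp.mapDomain (pihom d) h.coeff = 0) :
    (XX d - 1) ∣ h := by
  set ρ : (ℤ × ℤ) → (ℤ × ℤ) := fun s => (pihom d s) • w with hρ
  have hmap0 : (AddMonoidAlgebra.ofCoeff (Finsupp.mapDomain ρ h.coeff) : AA) = 0 := by
    have hcomp : ρ = (fun c : ℤ => c • w) ∘ ⇑(pihom d) := rfl
    rw [hcomp, Finsupp.mapDomain_comp, hz, Finsupp.mapDomain_zero]
    rfl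
  set mρ : AA := AddMonoidAlgebra.ofCoeff (Finsupp.mapDomain ρ h.coeff) with hmρ
  have hm : mρ = ∑ s ∈ h.coeff.support, sing (ρ s) (h.coeff s) := by
    rw [hmρ, Finsupp.mapDomain, Finsupp.sum, AddMonoidAlgebra.ofCoeff_sum]; rfl
  have hh : h = ∑ s ∈ h.coeff.support, sing s (h.coeff s) := by
    conv_lhs => rw [← AddMonoidAlgebra.sum_coeff_single h]
    rfl
  have key : (XX d - 1) ∣ (h - mρ) := by
    have hdiff : h - mρ = ∑ s ∈ h.coeff.support,
        (sing s (h.coeff s) - sing (ρ s) (h.coeff s)) := by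
      rw [Finset.sum_sub_distrib, ← hh, ← hm]
    rw [hdiff]
    apply Finset.dvd_sum
    intro s _
    have hker0 : pihom d (s - ρ s) = 0 := by
      rw [map_sub, hρ]
      simp only [map_zsmul, hw, smul_eq_mul, mul_one, sub_self]
    obtain ⟨j, hj⟩ := hker _ hker0
    have hterm : sing s (h.coeff s) - sing (ρ s) (h.coeff s)
        = sing (ρ s) (h.coeff s) * (XX (j • d) - (1:AA)) := by
      rw [mul_sub, mul_one]
      have hmul : sing (ρ s) (h.coeff s) * XX (j • d)
          = sing (ρ s + j • d) (h.coeff s) := by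
        simp only [XX]
        rw [sing_mul_sing, mul_one]
      rw [hmul]
      simp only [sing]
      congr 2
      rw [← hj]
      abel
    rw [hterm]
    exact Dvd.dvd.mul_left (dvd_X_zsmul_sub_one d j) _
  have hsplit : h = (h - mρ) + mρ := (sub_add_cancel h mρ).symm
  rw [hsplit]
  exact dvd_add key (by rw [hmap0]; exact dvd_zero _)

def Phi (e : ℤ × ℤ) : AA →+* LaurentPolynomial ℝ :=
  AddMonoidAlgebra.mapDomainRingHom ℝ (pihom e)

lemma Phi_apply (e : ℤ × ℤ) (x : AA) : Phi e x = AddMonoidAlgebra.ofCoeff (Finsupp.mapDomain (pihom e) x.coeff) := rfl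

lemma Phi_XX (e d : ℤ × ℤ) : Phi e (XX d) = LaurentPolynomial.T (pihom e d) := by
  rw [Phi_apply]
  show AddMonoidAlgebra.ofCoeff (Finsupp.mapDomain (pihom e) (Finsupp.single d 1)) = _
  rw [Finsupp.mapDomain_single]
  rfl

lemma TsubOne_ne_zero (c : ℤ) (hc : c ≠ 0) :
    (LaurentPolynomial.T c - 1 : LaurentPolynomial ℝ) ≠ 0 := by
  rw [sub_ne_zero]
  intro H
  have : (AddMonoidAlgebra.single c (1:ℝ) : LaurentPolynomial ℝ) = AddMonoidAlgebra.single 0 (1:ℝ) := H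
  rcases AddMonoidAlgebra.single_inj.mp this with ⟨h1, _⟩ | ⟨h1, _⟩
  · exact hc h1
  · exact one_ne_zero h1

lemma main_ind (S : Finset (ℤ × ℤ)) :
    (∀ d ∈ S, (∃ w, pihom d w = 1) ∧ (∀ s, pihom d s = 0 → ∃ j : ℤ, s = j • d)) →
    (∀ d ∈ S, ∀ e ∈ S, d ≠ e → pihom e d ≠ 0) →
    ∀ h : AA, (∀ d ∈ S, Finsupp.mapDomain (pihom d) h.coeff = 0) →
    (∏ d ∈ S, (XX d - 1)) ∣ h := by
  induction S using Finset.induction_on with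
  | empty => intro _ _ h _; simp
  | @insert a s ha ih =>
    intro hGood hind h hz
    obtain ⟨⟨w, hw⟩, hker⟩ := hGood a (Finset.mem_insert_self a s)
    obtain ⟨v, hv⟩ := div_of_fibersum_zero a w hw hker h (hz a (Finset.mem_insert_self a s))
    have hzv : ∀ e ∈ s, Finsupp.mapDomain (pihom e) v.coeff = 0 := by
      intro e he
      have hane : a ≠ e := fun hae => ha (hae ▸ he)
      have h1 : (Phi e) h = 0 := by rw [Phi_apply, hz e (Finset.mem_insert_of_mem he)]; rfl
      have h2 : (Phi e) (XX a - 1) = LaurentPolynomial.T (pihom e a) - 1 := by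
        rw [map_sub, map_one, Phi_XX]
      have hmul : (LaurentPolynomial.T (pihom e a) - 1) * (Phi e) v = 0 := by
        rw [← h2, ← map_mul, ← hv, h1]
      rcases mul_eq_zero.mp hmul with h' | h'
      · exact absurd h' (TsubOne_ne_zero _ (hind a (Finset.mem_insert_self a s) e
          (Finset.mem_insert_of_mem he) hane))
      · exact congrArg AddMonoidAlgebra.coeff h'
    have hdvd := ih (fun d hd => hGood d (Finset.mem_insert_of_mem hd))
      (fun d hd e he hne => hind d (Finset.mem_insert_of_mem hd) e
        (Finset.mem_insert_of_mem he) hne) v hzv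
    rw [Finset.prod_insert ha, hv]
    exact mul_dvd_mul dvd_rfl hdvd

open LaurentPolynomial in
lemma exists_poly_rep (L : LaurentPolynomial ℝ) (hL : L ≠ 0) (A B : ℤ)
    (hAB : ∀ s ∈ L.coeff.support, A ≤ s ∧ s ≤ B) :
    ∃ (p : Polynomial ℝ) (t : ℤ), Polynomial.toLaurent p = T t * L ∧
      p.coeff 0 ≠ 0 ∧ (p.natDegree : ℤ) ≤ B - A := by
  have hsupp : L.coeff.support.Nonempty :=
    Finsupp.support_nonempty_iff.mpr (fun h0 => hL (AddMonoidAlgebra.coeff_eq_zero.mp h0))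
  set m : ℤ := L.coeff.support.min' hsupp with hm
  have hmmem : m ∈ L.coeff.support := L.coeff.support.min'_mem hsupp
  set p : Polynomial ℝ := ∑ s ∈ L.coeff.support, Polynomial.C (L.coeff s) * Polynomial.X ^ (s - m).toNat
    with hp
  refine ⟨p, -m, ?_, ?_, ?_⟩
  · rw [hp, map_sum]
    have hLsum : L = ∑ s ∈ L.coeff.support,
        (AddMonoidAlgebra.single s (L.coeff s) : LaurentPolynomial ℝ) := by
      conv_lhs => rw [← AddMonoidAlgebra.sum_coeff_single L]
      rfl
    conv_rhs => rw [hLsum]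
    rw [Finset.mul_sum]
    refine Finset.sum_congr rfl (fun s hs => ?_)
    have hms : m ≤ s := L.coeff.support.min'_le s hs
    rw [single_eq_C_mul_T, map_mul, Polynomial.toLaurent_C, Polynomial.toLaurent_X_pow]
    rw [← mul_assoc, mul_comm (T (-m)) (C (L.coeff s)), mul_assoc, ← T_add]
    congr 2
    omega
  · rw [hp, Polynomial.finset_sum_coeff]
    have : ∀ s ∈ L.coeff.support, s ≠ m →
        (Polynomial.C (L.coeff s) * Polynomial.X ^ (s - m).toNat).coeff 0 = 0 := by
      intro s hs hsm
      have hms : m ≤ s := L.coeff.support.min'_le s hs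
      have : (s - m).toNat ≠ 0 := by omega
      rw [Polynomial.coeff_C_mul, Polynomial.coeff_X_pow]
      simp [this.symm, Ne.symm this]
    rw [Finset.sum_eq_single m this (fun hmem => absurd hmmem hmem)]
    simp only [sub_self, Int.toNat_zero, pow_zero, mul_one, Polynomial.coeff_C, if_pos rfl]
    exact Finsupp.mem_support_iff.mp hmmem
  · have hABm : A ≤ m := (hAB m hmmem).1
    have hBA : 0 ≤ B - A := by
      have := (hAB m hmmem).2; omega
    calc (p.natDegree : ℤ) ≤ ((B - A).toNat : ℤ) := by
          apply Nat.cast_le.mpr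
          rw [hp]
          apply Polynomial.natDegree_sum_le_of_forall_le
          intro s hs
          refine (Polynomial.natDegree_C_mul_X_pow_le _ _).trans ?_
          have := (hAB s hs).2
          omega
      _ = B - A := by omega

open LaurentPolynomial in
lemma shift_eq_zero_of_coeff_zero (p q : Polynomial ℝ) (E : ℤ) (hE : 0 ≤ E)
    (h : Polynomial.toLaurent p = T E * Polynomial.toLaurent q)
    (hp0 : p.coeff 0 ≠ 0) : E = 0 := by
  have hTE : (T E : LaurentPolynomial ℝ) = Polynomial.toLaurent (Polynomial.X ^ E.toNat) := by
    rw [Polynomial.toLaurent_X_pow]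
    congr 1
    omega
  rw [hTE, ← map_mul] at h
  have hpq : p = Polynomial.X ^ E.toNat * q := Polynomial.toLaurent_injective h
  by_contra hne
  have hEpos : E.toNat ≠ 0 := by omega
  have : p.coeff 0 = 0 := by
    rw [hpq, Polynomial.mul_coeff_zero, Polynomial.coeff_X_pow]
    simp [Ne.symm hEpos]
  exact hp0 this

open LaurentPolynomial in
lemma poly_rep_unique (L : LaurentPolynomial ℝ) (p q : Polynomial ℝ) (a b : ℤ)
    (hp : Polynomial.toLaurent p = T a * L) (hq : Polynomial.toLaurent q = T b * L)
    (hp0 : p.coeff 0 ≠ 0) (hq0 : q.coeff 0 ≠ 0) : p = q := by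
  have hL : L = T (-b) * Polynomial.toLaurent q := by
    rw [hq, ← mul_assoc, ← T_add]
    simp [T_zero]
  have hab : Polynomial.toLaurent p = T (a - b) * Polynomial.toLaurent q := by
    rw [hp, hL, ← mul_assoc, ← T_add, show a + -b = a - b from by ring]
  rcases le_total b a with hba | hba
  · have := shift_eq_zero_of_coeff_zero p q (a - b) (by omega) hab hp0
    have h0 : Polynomial.toLaurent p = Polynomial.toLaurent q := by
      rw [hab, this, T_zero, one_mul]
    exact Polynomial.toLaurent_injective h0
  · have hL' : L = T (-a) * Polynomial.toLaurent p := by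
      rw [hp, ← mul_assoc, ← T_add]
      simp [T_zero]
    have hab' : Polynomial.toLaurent q = T (b - a) * Polynomial.toLaurent p := by
      rw [hq, hL', ← mul_assoc, ← T_add, show b + -a = b - a from by ring]
    have := shift_eq_zero_of_coeff_zero q p (b - a) (by omega) hab' hq0
    have h0 : Polynomial.toLaurent q = Polynomial.toLaurent p := by
      rw [hab', this, T_zero, one_mul]
    exact (Polynomial.toLaurent_injective h0).symm

open LaurentPolynomial in
lemma factor_rep (c : ℤ) (hc : c ≠ 0) :
    ∃ (p : Polynomial ℝ) (t : ℤ), Polynomial.toLaurent p = T t * (T c - 1) ∧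
      p.coeff 0 ≠ 0 ∧ (p.natDegree : ℤ) = |c| := by
  rcases lt_or_gt_of_ne hc with hneg | hpos
  · refine ⟨1 - Polynomial.X ^ (-c).toNat, -c, ?_, ?_, ?_⟩
    · rw [map_sub, map_one, Polynomial.toLaurent_X_pow, mul_sub, mul_one, ← T_add,
        show -c + c = 0 from by ring, T_zero]
      congr 2
      omega
    · have hk : (-c).toNat ≠ 0 := by omega
      rw [Polynomial.coeff_sub, Polynomial.coeff_one, Polynomial.coeff_X_pow]
      simp [Ne.symm hk]
    · have : (1 - Polynomial.X ^ (-c).toNat : Polynomial ℝ)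
          = -(Polynomial.X ^ (-c).toNat - Polynomial.C 1) := by
        rw [Polynomial.C_1]; ring
      rw [this, Polynomial.natDegree_neg, Polynomial.natDegree_X_pow_sub_C, abs_of_neg hneg]
      omega
  · refine ⟨Polynomial.X ^ c.toNat - 1, 0, ?_, ?_, ?_⟩
    · rw [map_sub, map_one, Polynomial.toLaurent_X_pow, T_zero, one_mul]
      congr 2
      omega
    · have hk : c.toNat ≠ 0 := by omega
      rw [Polynomial.coeff_sub, Polynomial.coeff_one, Polynomial.coeff_X_pow]
      simp [Ne.symm hk]
    · have : (Polynomial.X ^ c.toNat - 1 : Polynomial ℝ)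
          = Polynomial.X ^ c.toNat - Polynomial.C 1 := by simp
      rw [this, Polynomial.natDegree_X_pow_sub_C, abs_of_pos hpos]
      omega

open LaurentPolynomial in
lemma T_prod (S : Finset (ℤ × ℤ)) (f : ℤ × ℤ → ℤ) :
    (∏ d ∈ S, (T (f d) : LaurentPolynomial ℝ)) = T (∑ d ∈ S, f d) := by
  induction S using Finset.induction_on with
  | empty => simp [T_zero]
  | @insert a s ha ih =>
    rw [Finset.prod_insert ha, Finset.sum_insert ha, ih, ← T_add]

def dirSet (q : ℕ) : Finset (ℤ × ℤ) :=
  (Finset.Icc (-(q:ℤ)) q).image (fun k => ((1:ℤ), k)) ∪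
    ((Finset.Icc (-(q:ℤ)) q).filter (fun k => k.natAbs ≠ 1)).image (fun k => (k, (1:ℤ)))

lemma mem_dirSet {q : ℕ} {d : ℤ × ℤ} :
    d ∈ dirSet q ↔ (∃ k : ℤ, -(q:ℤ) ≤ k ∧ k ≤ (q:ℤ) ∧ d = (1, k)) ∨
      (∃ k : ℤ, -(q:ℤ) ≤ k ∧ k ≤ (q:ℤ) ∧ k.natAbs ≠ 1 ∧ d = (k, 1)) := by
  simp only [dirSet, Finset.mem_union, Finset.mem_image, Finset.mem_filter, Finset.mem_Icc]
  constructor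
  · rintro (⟨k, hk, rfl⟩ | ⟨k, ⟨hk, hk1⟩, rfl⟩)
    · exact Or.inl ⟨k, hk.1, hk.2, rfl⟩
    · exact Or.inr ⟨k, hk.1, hk.2, hk1, rfl⟩
  · rintro (⟨k, hk1, hk2, rfl⟩ | ⟨k, hk1, hk2, hk3, rfl⟩)
    · exact Or.inl ⟨k, ⟨hk1, hk2⟩, rfl⟩
    · exact Or.inr ⟨k, ⟨⟨hk1, hk2⟩, hk3⟩, rfl⟩

lemma dirSet_good (q : ℕ) : ∀ d ∈ dirSet q,
    (∃ w, pihom d w = 1) ∧ (∀ s, pihom d s = 0 → ∃ j : ℤ, s = j • d) := by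
  intro d hd
  rcases mem_dirSet.mp hd with ⟨k, _, _, rfl⟩ | ⟨k, _, _, _, rfl⟩
  · constructor
    · exact ⟨(0, -1), by simp [pihom_apply]⟩
    · intro s hs
      rw [pihom_apply] at hs
      have hs' : k * s.1 - s.2 = 0 := by simpa using hs
      refine ⟨s.1, ?_⟩
      have hsm : s.1 • ((1:ℤ), k) = (s.1 * 1, s.1 * k) := rfl
      rw [hsm, Prod.ext_iff]
      constructor
      · simp
      · show s.2 = s.1 * k
        rw [mul_comm]
        omega
  · constructor
    · exact ⟨(1, 0), by simp [pihom_apply]⟩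
    · intro s hs
      rw [pihom_apply] at hs
      have hs' : s.1 - k * s.2 = 0 := by simpa using hs
      refine ⟨s.2, ?_⟩
      have hsm : s.2 • (k, (1:ℤ)) = (s.2 * k, s.2 * 1) := rfl
      rw [hsm, Prod.ext_iff]
      constructor
      · show s.1 = s.2 * k
        rw [mul_comm]
        omega
      · simp

lemma natAbs_eq_one_of_mul_eq_one {a b : ℤ} (h : a * b = 1) : a.natAbs = 1 := by
  rcases Int.isUnit_iff.mp (IsUnit.of_mul_eq_one b h) with h1 | h1 <;> simp [h1]

lemma dirSet_indep (q : ℕ) : ∀ d ∈ dirSet q, ∀ e ∈ dirSet q, d ≠ e → pihom e d ≠ 0 := by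
  intro d hd e he hde
  rcases mem_dirSet.mp hd with ⟨j, _, _, rfl⟩ | ⟨j, _, _, hj1, rfl⟩ <;>
    rcases mem_dirSet.mp he with ⟨k, _, _, rfl⟩ | ⟨k, _, _, hk1, rfl⟩ <;>
      rw [pihom_apply] <;> intro hcon <;> simp only [] at hcon
  · exact hde (by have : j = k := by omega
                  rw [this])
  · exact hk1 (natAbs_eq_one_of_mul_eq_one (a := k) (b := j) (by omega))
  · exact hj1 (natAbs_eq_one_of_mul_eq_one (a := j) (b := k) (by nlinarith))
  · exact hde (by have : j = k := by omega
                  rw [this])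

lemma sum_abs_Icc (q : ℕ) : ∑ k ∈ Finset.Icc (-(q:ℤ)) (q:ℤ), |k| = (q:ℤ) * (q + 1) := by
  induction q with
  | zero => simp
  | succ q ih =>
    have h1 : ((q+1:ℕ):ℤ) = (q:ℤ)+1 := by push_cast; ring
    rw [h1]
    have hins : Finset.Icc (-((q:ℤ)+1)) ((q:ℤ)+1)
        = insert (-((q:ℤ)+1)) (insert ((q:ℤ)+1) (Finset.Icc (-(q:ℤ)) (q:ℤ))) := by
      ext k
      simp only [Finset.mem_Icc, Finset.mem_insert]
      omega
    rw [hins, Finset.sum_insert, Finset.sum_insert, ih]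
    · have ha : |(-((q:ℤ)+1))| = (q:ℤ)+1 := by
        rw [abs_neg, abs_of_nonneg (by positivity)]
      have hb : |((q:ℤ)+1)| = (q:ℤ)+1 := abs_of_nonneg (by positivity)
      rw [ha, hb]
      ring
    · simp only [Finset.mem_Icc]
      omega
    · simp only [Finset.mem_insert, Finset.mem_Icc]
      omega

lemma sum_abs_filter (q : ℕ) (hq : 1 ≤ q) :
    ∑ k ∈ (Finset.Icc (-(q:ℤ)) (q:ℤ)).filter (fun k => k.natAbs ≠ 1), |k|
      = (q:ℤ) * (q+1) - 2 := by
  classical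
  have hsplit := Finset.sum_filter_add_sum_filter_not (Finset.Icc (-(q:ℤ)) (q:ℤ))
    (fun k => k.natAbs ≠ 1) (fun k => |k|)
  have hone : (Finset.Icc (-(q:ℤ)) (q:ℤ)).filter (fun k => ¬ k.natAbs ≠ 1)
      = ({1, -1} : Finset ℤ) := by
    ext k
    simp only [Finset.mem_filter, Finset.mem_Icc, Finset.mem_insert, Finset.mem_singleton,
      not_not]
    constructor
    · rintro ⟨_, h⟩
      omega
    · rintro (rfl | rfl) <;> refine ⟨⟨by omega, by omega⟩, by omega⟩
  rw [hone] at hsplit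
  have h2 : ∑ k ∈ ({1, -1} : Finset ℤ), |k| = 2 := by
    rw [Finset.sum_pair (by norm_num)]
    norm_num
  rw [h2, sum_abs_Icc] at hsplit
  linarith

lemma dirSet_disj (q : ℕ) :
    Disjoint ((Finset.Icc (-(q:ℤ)) q).image (fun k => ((1:ℤ), k)))
      (((Finset.Icc (-(q:ℤ)) q).filter (fun k => k.natAbs ≠ 1)).image (fun k => (k, (1:ℤ)))) := by
  rw [Finset.disjoint_left]
  rintro d hd1 hd2
  obtain ⟨k, _, rfl⟩ := Finset.mem_image.mp hd1
  obtain ⟨k', hk', hkk⟩ := Finset.mem_image.mp hd2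
  have h1 : k' = 1 := (Prod.ext_iff.mp hkk).1
  have := (Finset.mem_filter.mp hk').2
  rw [h1] at this
  simp at this

lemma sum_fst_dirSet (q : ℕ) (hq : 1 ≤ q) :
    ∑ d ∈ dirSet q, |d.1| = (q:ℤ)^2 + 3*q - 1 := by
  rw [dirSet, Finset.sum_union (dirSet_disj q)]
  rw [Finset.sum_image (by intro a _ b _ h; exact (Prod.ext_iff.mp h).2)]
  rw [Finset.sum_image (by intro a _ b _ h; exact (Prod.ext_iff.mp h).1)]
  simp only []
  have hc : ∑ k ∈ Finset.Icc (-(q:ℤ)) (q:ℤ), |((1:ℤ),k).1| = (2*q+1 : ℤ) := by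
    rw [Finset.sum_congr rfl (fun k _ => show |((1:ℤ),k).1| = 1 from by norm_num)]
    rw [Finset.sum_const, Int.card_Icc]
    have : ((q:ℤ) + 1 - -(q:ℤ)).toNat = 2*q+1 := by omega
    rw [this]
    push_cast
    ring
  have hs : ∑ k ∈ (Finset.Icc (-(q:ℤ)) (q:ℤ)).filter (fun k => k.natAbs ≠ 1), |((k,(1:ℤ))).1|
      = (q:ℤ) * (q+1) - 2 := by
    rw [Finset.sum_congr rfl (fun k _ => show |((k,(1:ℤ))).1| = |k| from rfl)]
    exact sum_abs_filter q hq
  rw [hc, hs]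
  push_cast
  ring

lemma card_dirSet_le (q : ℕ) : (dirSet q).card ≤ 4*q+2 := by
  refine (Finset.card_union_le _ _).trans ?_
  have h1 : ((Finset.Icc (-(q:ℤ)) q).image (fun k => ((1:ℤ), k))).card ≤ 2*q+1 := by
    refine (Finset.card_image_le).trans ?_
    rw [Int.card_Icc]
    omega
  have h2 : (((Finset.Icc (-(q:ℤ)) q).filter (fun k => k.natAbs ≠ 1)).image
      (fun k => (k, (1:ℤ)))).card ≤ 2*q+1 := by
    refine (Finset.card_image_le).trans ?_
    refine (Finset.card_filter_le _ _).trans ?_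
    rw [Int.card_Icc]
    omega
  omega

lemma snd_dirSet_le (q : ℕ) (hq : 1 ≤ q) : ∀ d ∈ dirSet q, |d.2| ≤ (q:ℤ) := by
  intro d hd
  rcases mem_dirSet.mp hd with ⟨k, h1, h2, rfl⟩ | ⟨k, _, _, _, rfl⟩
  · simp only []
    rw [abs_le]
    exact ⟨h1, h2⟩
  · simp only []
    rw [abs_one]
    omega

lemma sum_snd_dirSet_le (q : ℕ) (hq : 1 ≤ q) :
    ∑ d ∈ dirSet q, |d.2| ≤ ((4*q+2) * q : ℤ) := by
  calc ∑ d ∈ dirSet q, |d.2| ≤ ∑ _d ∈ dirSet q, (q:ℤ) :=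
        Finset.sum_le_sum (snd_dirSet_le q hq)
    _ = (dirSet q).card * (q:ℤ) := by rw [Finset.sum_const, nsmul_eq_mul]
    _ ≤ ((4*q+2) * q : ℤ) := by
        have := card_dirSet_le q
        have hcast : ((dirSet q).card : ℤ) ≤ (4*q+2 : ℤ) := by exact_mod_cast this
        have hq0 : (0:ℤ) ≤ (q:ℤ) := by positivity
        exact mul_le_mul_of_nonneg_right hcast hq0

open LaurentPolynomial in
lemma h_eq_zero (q n : ℕ) (hq : 2 ≤ q) (hn : 0 < n) (hnq : (n:ℤ) ≤ (q:ℤ)^2 + 3*q - 1)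
    (h : AA) (hsupp : ∀ s ∈ h.coeff.support, 1 ≤ s.1 ∧ s.1 ≤ (n:ℤ) ∧ 1 ≤ s.2 ∧ s.2 ≤ (n:ℤ))
    (hz : ∀ d ∈ dirSet q, Finsupp.mapDomain (pihom d) h.coeff = 0) : h = 0 := by
  classical
  by_contra hne
  have hq' : (2:ℤ) ≤ (q:ℤ) := by exact_mod_cast hq
  have hn' : (1:ℤ) ≤ (n:ℤ) := by exact_mod_cast hn
  obtain ⟨u, hu⟩ := main_ind (dirSet q) (dirSet_good q) (dirSet_indep q) h hz
  set M : ℤ := 5*(q:ℤ)^2 + n with hM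
  have hMq : (q:ℤ) < M := by nlinarith
  have hMn : (n:ℤ) < M := by nlinarith
  have hM0 : (0:ℤ) ≤ M := by nlinarith
  set φ : (ℤ × ℤ) →+ ℤ := AddMonoidHom.mk' (fun s => M * s.1 + s.2)
    (by intro a b; simp only [Prod.fst_add, Prod.snd_add]; ring) with hφ
  have hφ_apply : ∀ s : ℤ × ℤ, φ s = M * s.1 + s.2 := fun s => rfl
  set Ψ : AA →+* LaurentPolynomial ℝ := AddMonoidAlgebra.mapDomainRingHom ℝ φ with hΨdef
  have hΨ_apply : ∀ x : AA, Ψ x = AddMonoidAlgebra.ofCoeff (Finsupp.mapDomain φ x.coeff) :=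
    fun x => rfl
  have hΨ_XX : ∀ d : ℤ × ℤ, Ψ (XX d) = T (φ d) := by
    intro d
    rw [hΨ_apply]
    show AddMonoidAlgebra.ofCoeff (Finsupp.mapDomain φ (Finsupp.single d 1)) = _
    rw [Finsupp.mapDomain_single]
    rfl
  -- φ d ≠ 0 on dirSet
  have hφd : ∀ d ∈ dirSet q, φ d ≠ 0 := by
    intro d hd
    rw [hφ_apply]
    rcases mem_dirSet.mp hd with ⟨k, h1, h2, rfl⟩ | ⟨k, h1, h2, _, rfl⟩
    · show M * 1 + k ≠ 0
      omega
    · show M * k + 1 ≠ 0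
      rcases lt_trichotomy k 0 with hk | hk | hk
      · have : M * k ≤ M * (-1) := by
          apply mul_le_mul_of_nonneg_left (by omega) hM0
        intro hcon
        omega
      · simp [hk]
      · have : M * 1 ≤ M * k := by
          apply mul_le_mul_of_nonneg_left (by omega) hM0
        intro hcon
        omega
  -- injectivity of φ on support of h
  have hinj : Set.InjOn φ ↑(h.coeff.support) := by
    intro a ha b hb hab
    obtain ⟨ha1, ha2, ha3, ha4⟩ := hsupp a (Finset.mem_coe.mp ha)
    obtain ⟨hb1, hb2, hb3, hb4⟩ := hsupp b (Finset.mem_coe.mp hb)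
    rw [hφ_apply, hφ_apply] at hab
    rcases lt_trichotomy a.1 b.1 with hlt | heq | hgt
    · exfalso
      have h5 : M * (a.1 + 1) ≤ M * b.1 := mul_le_mul_of_nonneg_left (by omega) hM0
      have hexp : M * (a.1 + 1) = M * a.1 + M := by ring
      linarith
    · have : a.2 = b.2 := by
        rw [heq] at hab
        linarith
      exact Prod.ext heq this
    · exfalso
      have h5 : M * (b.1 + 1) ≤ M * a.1 := mul_le_mul_of_nonneg_left (by omega) hM0
      have hexp : M * (b.1 + 1) = M * b.1 + M := by ring
      linarith
  obtain ⟨s₀, hs₀⟩ := Finsupp.support_nonempty_iff.mpr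
    (fun h0 => hne (AddMonoidAlgebra.coeff_eq_zero.mp h0))
  have hΨh_at : (Finsupp.mapDomain φ h.coeff) (φ s₀) = h.coeff s₀ :=
    Finsupp.mapDomain_apply' ↑(h.coeff.support) h.coeff subset_rfl hinj (Finset.mem_coe.mpr hs₀)
  have hΨh : Ψ h ≠ 0 := by
    rw [hΨ_apply]
    intro H
    have H' : Finsupp.mapDomain φ h.coeff = 0 := congrArg AddMonoidAlgebra.coeff H
    rw [H'] at hΨh_at
    exact Finsupp.mem_support_iff.mp hs₀ hΨh_at.symm
  -- factored form
  have hfact : Ψ h = (∏ d ∈ dirSet q, (T (φ d) - 1)) * Ψ u := by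
    rw [hu, map_mul, map_prod]
    congr 1
    refine Finset.prod_congr rfl (fun d _ => ?_)
    rw [map_sub, map_one, hΨ_XX]
  have hΨu : Ψ u ≠ 0 := by
    intro H
    rw [H, mul_zero] at hfact
    exact hΨh hfact
  have hprod_ne : ∀ d ∈ dirSet q, (T (φ d) - 1 : LaurentPolynomial ℝ) ≠ 0 :=
    fun d hd => TsubOne_ne_zero _ (hφd d hd)
  -- polynomial representatives of the factors
  have hrep : ∀ d ∈ dirSet q, ∃ (p : Polynomial ℝ) (t : ℤ),
      Polynomial.toLaurent p = T t * (T (φ d) - 1) ∧ p.coeff 0 ≠ 0 ∧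
        (p.natDegree : ℤ) = |φ d| := fun d hd => factor_rep _ (hφd d hd)
  choose! pfun tfun hrep1 hrep2 hrep3 using hrep
  -- polynomial representative of Ψ u
  have husupp : (Ψ u).coeff.support.Nonempty :=
    Finsupp.support_nonempty_iff.mpr (fun h0 => hΨu (AddMonoidAlgebra.coeff_eq_zero.mp h0))
  obtain ⟨pu, tu, hpu1, hpu2, _⟩ := exists_poly_rep (Ψ u) hΨu
    ((Ψ u).coeff.support.min' husupp) ((Ψ u).coeff.support.max' husupp)
    (fun s hs => ⟨(Ψ u).coeff.support.min'_le s hs, (Ψ u).coeff.support.le_max' s hs⟩)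
  -- polynomial representative of Ψ h
  have hsuppΨh : ∀ s ∈ (Ψ h).coeff.support, M + 1 ≤ s ∧ s ≤ M * n + n := by
    intro s hs
    have hs' : s ∈ (Finsupp.mapDomain φ h.coeff).support := hs
    have := Finsupp.mapDomain_support hs'
    obtain ⟨p, hp, rfl⟩ := Finset.mem_image.mp this
    obtain ⟨hp1, hp2, hp3, hp4⟩ := hsupp p hp
    rw [hφ_apply]
    constructor
    · have : M * 1 ≤ M * p.1 := mul_le_mul_of_nonneg_left hp1 hM0
      omega
    · have : M * p.1 ≤ M * n := mul_le_mul_of_nonneg_left hp2 hM0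
      omega
  obtain ⟨ph, th, hph1, hph2, hph3⟩ := exists_poly_rep (Ψ h) hΨh (M+1) (M*n+n) hsuppΨh
  -- the product polynomial
  set P : Polynomial ℝ := (∏ d ∈ dirSet q, pfun d) * pu with hP
  have htoP : Polynomial.toLaurent P = T ((∑ d ∈ dirSet q, tfun d) + tu) * Ψ h := by
    rw [hP, map_mul, map_prod]
    have h1 : ∏ d ∈ dirSet q, Polynomial.toLaurent (pfun d)
        = T (∑ d ∈ dirSet q, tfun d) * ∏ d ∈ dirSet q, (T (φ d) - 1) := by
      rw [Finset.prod_congr rfl (fun d hd => hrep1 d hd), Finset.prod_mul_distrib,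
        T_prod]
    rw [h1, hpu1, hfact, T_add]
    ring
  have hP0 : P.coeff 0 ≠ 0 := by
    rw [hP, Polynomial.mul_coeff_zero]
    apply mul_ne_zero _ hpu2
    rw [Polynomial.coeff_zero_prod]
    exact Finset.prod_ne_zero_iff.mpr (fun d hd => hrep2 d hd)
  have hPeq : ph = P := poly_rep_unique (Ψ h) ph P th _ hph1 htoP hph2 hP0
  -- degree computation
  have hprodP_ne : (∏ d ∈ dirSet q, pfun d) ≠ 0 :=
    Finset.prod_ne_zero_iff.mpr (fun d hd h0 => hrep2 d hd (by rw [h0]; simp))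
  have hpu_ne : pu ≠ 0 := fun h0 => hpu2 (by rw [h0]; simp)
  have hdegP : (P.natDegree : ℤ) = (∑ d ∈ dirSet q, (|φ d| : ℤ)) + pu.natDegree := by
    rw [hP, Polynomial.natDegree_mul hprodP_ne hpu_ne,
      Polynomial.natDegree_prod _ _ (fun d hd h0 => hrep2 d hd (by rw [h0]; simp))]
    push_cast
    rw [Finset.sum_congr rfl (fun d hd => hrep3 d hd)]
  have hlow : ∀ d ∈ dirSet q, M * |d.1| - |d.2| ≤ |φ d| := by
    intro d hd
    rw [hφ_apply]
    have h1 : |M * d.1| ≤ |M * d.1 + d.2| + |d.2| := by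
      have := abs_add_le (M * d.1 + d.2) (-d.2)
      simp only [add_neg_cancel_right, abs_neg] at this
      exact this
    have h2 : |M * d.1| = M * |d.1| := by rw [abs_mul, abs_of_nonneg hM0]
    linarith
  have hsum : M * ((q:ℤ)^2+3*q-1) - (4*q+2)*q ≤ ∑ d ∈ dirSet q, (|φ d| : ℤ) := by
    have e1 : ∑ d ∈ dirSet q, |d.1| = (q:ℤ)^2 + 3*q - 1 := sum_fst_dirSet q (by omega)
    have e2 : ∑ d ∈ dirSet q, |d.2| ≤ ((4*q+2) * q : ℤ) := sum_snd_dirSet_le q (by omega)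
    calc M * ((q:ℤ)^2+3*q-1) - (4*q+2)*q
        ≤ M * (∑ d ∈ dirSet q, |d.1|) - ∑ d ∈ dirSet q, |d.2| := by
          rw [e1]
          linarith
      _ = ∑ d ∈ dirSet q, (M * |d.1| - |d.2|) := by
          rw [Finset.sum_sub_distrib, Finset.mul_sum]
      _ ≤ ∑ d ∈ dirSet q, (|φ d| : ℤ) := Finset.sum_le_sum hlow
  have hfin1 : (∑ d ∈ dirSet q, (|φ d| : ℤ)) ≤ (ph.natDegree : ℤ) := by
    rw [hPeq, hdegP]
    have : (0:ℤ) ≤ (pu.natDegree : ℤ) := by positivity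
    linarith
  have hmono : M * (n:ℤ) ≤ M * ((q:ℤ)^2+3*q-1) := mul_le_mul_of_nonneg_left hnq hM0
  nlinarith [hph3, hfin1, hsum, hmono, hq', hn', sq_nonneg ((q:ℤ) - 2)]

def hfun (n : ℕ) (f g : ℤ × ℤ → ℝ) : AA :=
  ∑ p ∈ (Finset.Icc (1:ℤ) (n:ℤ) ×ˢ Finset.Icc (1:ℤ) (n:ℤ)), sing p (f p - g p)

lemma hfun_support (n : ℕ) (f g : ℤ × ℤ → ℝ) :
    (hfun n f g).coeff.support ⊆ Finset.Icc (1:ℤ) (n:ℤ) ×ˢ Finset.Icc (1:ℤ) (n:ℤ) := by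
  classical
  rw [hfun, AddMonoidAlgebra.coeff_sum]
  refine Finset.Subset.trans Finsupp.support_finset_sum ?_
  intro x hx
  obtain ⟨p, hp, hxp⟩ := Finset.mem_biUnion.mp hx
  have : x ∈ ({p} : Finset (ℤ × ℤ)) := Finsupp.support_single_subset hxp
  rw [Finset.mem_singleton] at this
  rw [this]
  exact hp

lemma hfun_apply (n : ℕ) (f g : ℤ × ℤ → ℝ) (p : ℤ × ℤ)
    (hp : p ∈ Finset.Icc (1:ℤ) (n:ℤ) ×ˢ Finset.Icc (1:ℤ) (n:ℤ)) :
    (hfun n f g).coeff p = f p - g p := by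
  classical
  rw [hfun, AddMonoidAlgebra.coeff_sum, Finsupp.finset_sum_apply]
  rw [Finset.sum_congr rfl (fun p' _ => show (sing p' (f p' - g p') : AA).coeff p
    = if p' = p then (f p' - g p') else 0 from Finsupp.single_apply)]
  rw [Finset.sum_ite_eq' _ p _, if_pos hp]

lemma hfun_mapDomain (n : ℕ) (f g : ℤ × ℤ → ℝ) (π : (ℤ × ℤ) →+ ℤ) (t : ℤ) :
    (Finsupp.mapDomain π (hfun n f g).coeff) t
      = ∑ p ∈ (Finset.Icc (1:ℤ) (n:ℤ) ×ˢ Finset.Icc (1:ℤ) (n:ℤ)).filter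
          (fun p => π p = t), (f p - g p) := by
  classical
  rw [hfun, AddMonoidAlgebra.coeff_sum, Finsupp.mapDomain_finset_sum]
  rw [Finsupp.finset_sum_apply]
  rw [Finset.sum_congr rfl (fun p _ => show (Finsupp.mapDomain (⇑π) (sing p (f p - g p)).coeff) t
    = if π p = t then (f p - g p) else 0 from by
      rw [show (sing p (f p - g p) : AA).coeff = Finsupp.single p (f p - g p) from rfl,
        Finsupp.mapDomain_single, Finsupp.single_apply])]
  exact (Finset.sum_filter _ _).symm
lemma clueSum_sub (n : ℕ) (s : Slope) (c : ℝ) (f g : ℤ × ℤ → ℝ) :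
    clueSum n n s c f - clueSum n n s c g
      = ∑ p ∈ (Finset.Icc (1 : ℤ) (n:ℤ) ×ˢ Finset.Icc (1 : ℤ) (n:ℤ)).filter
          (fun p => match s with
            | Option.none => (p.1 : ℝ) = c
            | Option.some r => (p.2 : ℝ) = (r : ℝ) * (p.1 : ℝ) + c),
        (f p - g p) := by
  rw [clueSum, clueSum, ← Finset.sum_sub_distrib]

lemma fiber_zero (q n : ℕ) (hq : 2 ≤ q) (f g : ℤ × ℤ → ℝ)
    (hfg : ClueEquiv n n (CposQ q) f g) :
    ∀ d ∈ dirSet q, Finsupp.mapDomain (pihom d) (hfun n f g).coeff = 0 := by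
  intro d hd
  ext t
  rw [hfun_mapDomain, Finsupp.coe_zero, Pi.zero_apply]
  rcases mem_dirSet.mp hd with ⟨k, h1, h2, rfl⟩ | ⟨k, h1, h2, h3, rfl⟩
  · -- slope k
    have hmem : (Option.some (k:ℚ) : Slope) ∈ CposQ q := by
      by_cases hk : k = 0
      · subst hk
        left
        left
        norm_num
      · right
        exact ⟨k, Int.one_le_abs (by omega), abs_le.mpr ⟨h1, h2⟩, Or.inl rfl⟩
    have hc := hfg _ hmem (-(t:ℝ))
    have hfilter : (Finset.Icc (1:ℤ) (n:ℤ) ×ˢ Finset.Icc (1:ℤ) (n:ℤ)).filter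
          (fun p => pihom (1, k) p = t)
        = (Finset.Icc (1:ℤ) (n:ℤ) ×ˢ Finset.Icc (1:ℤ) (n:ℤ)).filter
          (fun p => (p.2 : ℝ) = (((k:ℚ)) : ℝ) * (p.1 : ℝ) + (-(t:ℝ))) := by
      apply Finset.filter_congr
      intro p _
      rw [pihom_apply]
      show (k * p.1 - 1 * p.2 = t) ↔ _
      have hcast : (((k:ℚ)) : ℝ) = ((k:ℤ) : ℝ) := by push_cast; rfl
      rw [hcast]
      constructor
      · intro H
        have : ((k * p.1 - 1 * p.2 : ℤ) : ℝ) = ((t:ℤ):ℝ) := by exact Int.cast_inj.mpr H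
        push_cast at this
        linarith
      · intro H
        have : ((k * p.1 - 1 * p.2 : ℤ) : ℝ) = ((t:ℤ):ℝ) := by
          push_cast
          linarith
        exact_mod_cast this
    rw [hfilter]
    have := clueSum_sub n (Option.some (k:ℚ)) (-(t:ℝ)) f g
    simp only [] at this
    rw [← this, hc, sub_self]
  · -- family (k, 1)
    by_cases hk : k = 0
    · subst hk
      have hmem : (none : Slope) ∈ CposQ q := by
        left
        right
        rfl
      have hc := hfg _ hmem ((t:ℝ))
      have hfilter : (Finset.Icc (1:ℤ) (n:ℤ) ×ˢ Finset.Icc (1:ℤ) (n:ℤ)).filter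
            (fun p => pihom (0, 1) p = t)
          = (Finset.Icc (1:ℤ) (n:ℤ) ×ˢ Finset.Icc (1:ℤ) (n:ℤ)).filter
            (fun p => (p.1 : ℝ) = ((t:ℝ))) := by
        apply Finset.filter_congr
        intro p _
        rw [pihom_apply]
        show (1 * p.1 - 0 * p.2 = t) ↔ _
        constructor
        · intro H
          exact Int.cast_inj.mpr (by omega : p.1 = t)
        · intro H
          have : p.1 = t := by exact_mod_cast H
          omega
      rw [hfilter]
      have := clueSum_sub n none ((t:ℝ)) f g
      simp only [] at this
      rw [← this, hc, sub_self]
    · have hmem : (Option.some (1/(k:ℚ)) : Slope) ∈ CposQ q := by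
        right
        exact ⟨k, Int.one_le_abs (by omega), abs_le.mpr ⟨h1, h2⟩, Or.inr rfl⟩
      have hkR : ((k:ℤ):ℝ) ≠ 0 := Int.cast_ne_zero.mpr hk
      have hc := hfg _ hmem (-(t:ℝ)/(k:ℝ))
      have hfilter : (Finset.Icc (1:ℤ) (n:ℤ) ×ˢ Finset.Icc (1:ℤ) (n:ℤ)).filter
            (fun p => pihom (k, 1) p = t)
          = (Finset.Icc (1:ℤ) (n:ℤ) ×ˢ Finset.Icc (1:ℤ) (n:ℤ)).filter
            (fun p => (p.2 : ℝ) = ((1/(k:ℚ) : ℚ) : ℝ) * (p.1 : ℝ) + (-(t:ℝ)/(k:ℝ))) := by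
        apply Finset.filter_congr
        intro p _
        rw [pihom_apply]
        show (1 * p.1 - k * p.2 = t) ↔ _
        have hcast : ((1/(k:ℚ) : ℚ) : ℝ) = 1 / ((k:ℤ):ℝ) := by push_cast; rfl
        rw [hcast]
        constructor
        · intro H
          have : ((1 * p.1 - k * p.2 : ℤ) : ℝ) = ((t:ℤ):ℝ) := by exact Int.cast_inj.mpr H
          push_cast at this
          field_simp
          linarith
        · intro H
          have : ((1 * p.1 - k * p.2 : ℤ) : ℝ) = ((t:ℤ):ℝ) := by
            push_cast
            field_simp at H
            linarith
          exact_mod_cast this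
      rw [hfilter]
      have := clueSum_sub n (Option.some (1/(k:ℚ))) (-(t:ℝ)/(k:ℝ)) f g
      simp only [] at this
      rw [← this, hc, sub_self]

/-- if `q ≥ 2` and `n ≤ q² + 3q − 1`, then every entry of `I_{n,n}` is
uniquely solvable with respect to `C_q`; equivalently every solvable `n × n` RK puzzle
with clue slopes `C_q` has a unique solution. -/
theorem rk_unique_CposQ (q : ℕ) (hq : 2 ≤ q) (n : ℕ) (hn : 0 < n)
    (hnq : n ≤ q ^ 2 + 3 * q - 1) :
    ∀ f g : ℤ × ℤ → ℝ, ClueEquiv n n (CposQ q) f g →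
      ∀ p : ℤ × ℤ, 1 ≤ p.1 → p.1 ≤ (n : ℤ) → 1 ≤ p.2 → p.2 ≤ (n : ℤ) → f p = g p := by
  intro f g hfg p hp1 hp2 hp3 hp4
  have h1q : 1 ≤ q ^ 2 + 3 * q := by
    have : 1 ≤ 3 * q := by omega
    omega
  have hnq' : (n:ℤ) ≤ (q:ℤ)^2 + 3*(q:ℤ) - 1 := by
    have hcast : ((q ^ 2 + 3 * q - 1 : ℕ) : ℤ) = (q:ℤ)^2 + 3*(q:ℤ) - 1 := by
      rw [Nat.cast_sub h1q]
      push_cast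
      ring
    calc (n:ℤ) ≤ ((q ^ 2 + 3 * q - 1 : ℕ) : ℤ) := by exact_mod_cast hnq
      _ = (q:ℤ)^2 + 3*(q:ℤ) - 1 := hcast
  have hz := fiber_zero q n hq f g hfg
  have h0 : hfun n f g = 0 := by
    apply h_eq_zero q n hq hn hnq' (hfun n f g) _ hz
    intro s hs
    have hmem := hfun_support n f g hs
    rw [Finset.mem_product, Finset.mem_Icc, Finset.mem_Icc] at hmem
    exact ⟨hmem.1.1, hmem.1.2, hmem.2.1, hmem.2.2⟩
  have hp : p ∈ Finset.Icc (1:ℤ) (n:ℤ) ×ˢ Finset.Icc (1:ℤ) (n:ℤ) :=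
    Finset.mem_product.mpr ⟨Finset.mem_Icc.mpr ⟨hp1, hp2⟩, Finset.mem_Icc.mpr ⟨hp3, hp4⟩⟩
  have happ := hfun_apply n f g p hp
  rw [h0] at happ
  have : (0 : AA).coeff p = 0 := rfl
  rw [this] at happ
  linarith
end
end
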